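/- arXiv:1908.03172 — 3 statements merged into one kernel-verified Lean document; each statement's English description precedes it below -/
import Mathlib

section
/- Let G be a minimally non-(3,4)-colorable graph with girth at least 5, and let C = u_1 u_2 u_3 u_4 u_5 u_6 be a 6-cycle in G such that exactly two of the vertices u_1, ..., u_6 have degree 2. Then at most two of the vertices u_1, ..., u_6 are 5p-vertices. -/
/-- The degree of a vertex: the number of its neighbors. -/
noncomputable def degN {V : Type*} (G : SimpleGraph V) (v : V) : ℕ :=
  {w | G.Adj v w}.ncard

/-- `c` is a (3,4)-coloring of `G`: every vertex gets value 3 or 4, and every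
vertex with value `i` has at most `i` neighbors with value `i`. -/
def IsColoring34 {V : Type*} (G : SimpleGraph V) (c : V → ℕ) : Prop :=
  (∀ v, c v = 3 ∨ c v = 4) ∧ ∀ v, {w | G.Adj v w ∧ c w = c v}.ncard ≤ c v

/-- `G` is (3,4)-colorable. -/
def Colorable34 {V : Type*} (G : SimpleGraph V) : Prop :=
  ∃ c, IsColoring34 G c

/-- The graph `G − v` obtained by deleting the vertex `v` and its incident edges
(keeping `v` as an isolated vertex, which does not affect (3,4)-colorability). -/
def deleteVert {V : Type*} (G : SimpleGraph V) (v : V) : SimpleGraph V where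
  Adj a b := G.Adj a b ∧ a ≠ v ∧ b ≠ v
  symm := ⟨fun _ _ ⟨h, ha, hb⟩ => ⟨h.symm, hb, ha⟩⟩
  loopless := ⟨fun a ⟨h, _, _⟩ => G.loopless.irrefl a h⟩

/-- `G` is minimally non-(3,4)-colorable. -/
def MinNonColorable34 {V : Type*} (G : SimpleGraph V) : Prop :=
  ¬ Colorable34 G ∧ (∀ v, Colorable34 (deleteVert G v)) ∧
    ∀ e ∈ G.edgeSet, Colorable34 (G.deleteEdges {e})

/-- `u` is `i`-saturated under the coloring `c` of the graph `G`. -/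
def Saturated34 {V : Type*} (G : SimpleGraph V) (c : V → ℕ) (i : ℕ) (u : V) : Prop :=
  c u = i ∧ {w | G.Adj u w ∧ c w = i}.ncard = i

/-- `u` can be recolored: changing the color of `u` to the other color
(`7 - c u` swaps 3 and 4) again yields a (3,4)-coloring of `G`. -/
def Recolorable34 {V : Type*} [DecidableEq V] (G : SimpleGraph V) (c : V → ℕ) (u : V) : Prop :=
  IsColoring34 G (Function.update c u (7 - c u))

/-- The number of 3^+-neighbors of `x` in `G` (neighbors of degree at least 3). -/
noncomputable def tpn {V : Type*} (G : SimpleGraph V) (x : V) : ℕ :=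
  {w | G.Adj x w ∧ 3 ≤ degN G w}.ncard

/-- A 5p-vertex (poor 5-vertex): degree 5 with exactly one 3^+-neighbor. -/
def Is5p {V : Type*} (G : SimpleGraph V) (x : V) : Prop := degN G x = 5 ∧ tpn G x = 1

/-- A 5s-vertex (semi-poor 5-vertex): degree 5 with exactly two 3^+-neighbors. -/
def Is5s {V : Type*} (G : SimpleGraph V) (x : V) : Prop := degN G x = 5 ∧ tpn G x = 2

/-- A 6p-vertex (poor 6-vertex): degree 6 with exactly one 3^+-neighbor. -/
def Is6p {V : Type*} (G : SimpleGraph V) (x : V) : Prop := degN G x = 6 ∧ tpn G x = 1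

/-- `G` has girth at least 5: no 3-cycles and no 4-cycles. -/
def GirthAtLeast5 {V : Type*} (G : SimpleGraph V) : Prop :=
  (∀ a b c : V, G.Adj a b → G.Adj b c → ¬ G.Adj c a) ∧
  (∀ a b c d : V, a ≠ c → b ≠ d →
    G.Adj a b → G.Adj b c → G.Adj c d → ¬ G.Adj d a)

section Helpers
variable {V : Type*} [Fintype V]

lemma ncard_mono {s t : Set V} (h : s ⊆ t) : s.ncard ≤ t.ncard :=
  Set.ncard_le_ncard h (Set.toFinite t)

/-- Recoloring lemma: change the color of `a` to `j`. -/
lemma recolor34 [DecidableEq V] (H : SimpleGraph V) (c : V → ℕ)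
    (hc : IsColoring34 H c) (a : V) (j : ℕ) (hj : j = 3 ∨ j = 4)
    (hne : c a ≠ j)
    (h1 : {w | H.Adj a w ∧ c w = j}.ncard ≤ j)
    (h2 : ∀ w, H.Adj a w → c w = j → {t | H.Adj w t ∧ c t = j}.ncard < j) :
    IsColoring34 H (Function.update c a j) := by
  constructor
  · intro v
    by_cases hv : v = a
    · subst hv; simpa using hj
    · rw [Function.update_of_ne hv]; exact hc.1 v
  · intro v
    by_cases hv : v = a
    · subst hv
      have hset : {w | H.Adj v w ∧ Function.update c v j w = Function.update c v j v}
          = {w | H.Adj v w ∧ c w = j} := by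
        ext w
        simp only [Set.mem_setOf_eq, Function.update_self]
        constructor
        · rintro ⟨hw, h⟩
          have hwv : w ≠ v := fun e => H.loopless.irrefl v (e ▸ hw)
          rw [Function.update_of_ne hwv] at h
          exact ⟨hw, h⟩
        · rintro ⟨hw, h⟩
          have hwv : w ≠ v := fun e => H.loopless.irrefl v (e ▸ hw)
          exact ⟨hw, by rw [Function.update_of_ne hwv]; exact h⟩
      rw [hset, Function.update_self]
      exact h1
    · have hcv : Function.update c a j v = c v := Function.update_of_ne hv _ _
      rw [hcv]
      by_cases hadj : H.Adj v a
      · by_cases hja : c v = j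
        · have hsub : {w | H.Adj v w ∧ Function.update c a j w = c v}
              ⊆ insert a {w | H.Adj v w ∧ c w = c v} := by
            rintro w ⟨hw, hcw⟩
            by_cases hwa : w = a
            · subst hwa; exact Set.mem_insert _ _
            · rw [Function.update_of_ne hwa] at hcw
              exact Set.mem_insert_of_mem _ ⟨hw, hcw⟩
          have hold : {w | H.Adj v w ∧ c w = c v}.ncard < j := by
            have := h2 v hadj.symm hja
            rw [hja]; exact this
          calc {w | H.Adj v w ∧ Function.update c a j w = c v}.ncard
              ≤ (insert a {w | H.Adj v w ∧ c w = c v}).ncard := ncard_mono hsub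
            _ ≤ {w | H.Adj v w ∧ c w = c v}.ncard + 1 := Set.ncard_insert_le _ _
            _ ≤ j := hold
            _ = c v := hja.symm
        · have hsub : {w | H.Adj v w ∧ Function.update c a j w = c v}
              ⊆ {w | H.Adj v w ∧ c w = c v} := by
            rintro w ⟨hw, hcw⟩
            by_cases hwa : w = a
            · subst hwa; rw [Function.update_self] at hcw; exact absurd hcw.symm hja
            · rw [Function.update_of_ne hwa] at hcw; exact ⟨hw, hcw⟩
          exact le_trans (ncard_mono hsub) (hc.2 v)
      · have hsub : {w | H.Adj v w ∧ Function.update c a j w = c v}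
            ⊆ {w | H.Adj v w ∧ c w = c v} := by
          rintro w ⟨hw, hcw⟩
          have hwa : w ≠ a := fun e => hadj (e ▸ hw)
          rw [Function.update_of_ne hwa] at hcw; exact ⟨hw, hcw⟩
        exact le_trans (ncard_mono hsub) (hc.2 v)

/-- If the endpoints of the deleted edge get distinct colors, the coloring works for `G`. -/
lemma extend34 (G : SimpleGraph V) (x y : V)
    (c : V → ℕ) (hc : IsColoring34 (G.deleteEdges {s(x,y)}) c)
    (hne : c x ≠ c y) : IsColoring34 G c := by
  refine ⟨hc.1, fun v => ?_⟩
  have hsub : {w | G.Adj v w ∧ c w = c v}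
      ⊆ {w | (G.deleteEdges {s(x,y)}).Adj v w ∧ c w = c v} := by
    rintro w ⟨hw, hcw⟩
    refine ⟨SimpleGraph.deleteEdges_adj.mpr ⟨hw, ?_⟩, hcw⟩
    simp only [Set.mem_singleton_iff, Sym2.eq_iff]
    rintro (⟨rfl, rfl⟩ | ⟨rfl, rfl⟩)
    · exact hne hcw.symm
    · exact hne hcw
  exact le_trans (ncard_mono hsub) (hc.2 v)

/-- Analysis of why a coloring of `G - xy` fails to be a coloring of `G`. -/
lemma break34 (G : SimpleGraph V) (hnc : ¬ Colorable34 G) (x y : V) (hxy : G.Adj x y)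
    (c : V → ℕ) (hc : IsColoring34 (G.deleteEdges {s(x,y)}) c) :
    c x = c y ∧
      ({w | (G.deleteEdges {s(x,y)}).Adj x w ∧ c w = c x}.ncard = c x ∨
       {w | (G.deleteEdges {s(x,y)}).Adj y w ∧ c w = c y}.ncard = c y) := by
  by_cases hne : c x = c y
  · refine ⟨hne, ?_⟩
    by_contra hsat
    push_neg at hsat
    obtain ⟨hsx, hsy⟩ := hsat
    have hsx' := lt_of_le_of_ne (hc.2 x) hsx
    have hsy' := lt_of_le_of_ne (hc.2 y) hsy
    apply hnc
    refine ⟨c, hc.1, fun v => ?_⟩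
    by_cases hvx : v = x
    · subst hvx
      have hsub : {w | G.Adj v w ∧ c w = c v}
          ⊆ insert y {w | (G.deleteEdges {s(v,y)}).Adj v w ∧ c w = c v} := by
        rintro w ⟨hw, hcw⟩
        by_cases hwy : w = y
        · subst hwy; exact Set.mem_insert _ _
        · refine Set.mem_insert_of_mem _ ⟨SimpleGraph.deleteEdges_adj.mpr ⟨hw, ?_⟩, hcw⟩
          simp only [Set.mem_singleton_iff, Sym2.eq_iff]
          rintro (⟨-, rfl⟩ | ⟨rfl, rfl⟩)
          · exact hwy rfl
          · exact G.loopless.irrefl _ hw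
      calc {w | G.Adj v w ∧ c w = c v}.ncard
          ≤ (insert y {w | (G.deleteEdges {s(v,y)}).Adj v w ∧ c w = c v}).ncard :=
            ncard_mono hsub
        _ ≤ {w | (G.deleteEdges {s(v,y)}).Adj v w ∧ c w = c v}.ncard + 1 :=
            Set.ncard_insert_le _ _
        _ ≤ c v := hsx'
    · by_cases hvy : v = y
      · subst hvy
        have hsub : {w | G.Adj v w ∧ c w = c v}
            ⊆ insert x {w | (G.deleteEdges {s(x,v)}).Adj v w ∧ c w = c v} := by
          rintro w ⟨hw, hcw⟩
          by_cases hwx : w = x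
          · subst hwx; exact Set.mem_insert _ _
          · refine Set.mem_insert_of_mem _ ⟨SimpleGraph.deleteEdges_adj.mpr ⟨hw, ?_⟩, hcw⟩
            simp only [Set.mem_singleton_iff, Sym2.eq_iff]
            rintro (⟨rfl, rfl⟩ | ⟨-, rfl⟩)
            · exact G.loopless.irrefl _ hw
            · exact hwx rfl
        calc {w | G.Adj v w ∧ c w = c v}.ncard
            ≤ (insert x {w | (G.deleteEdges {s(x,v)}).Adj v w ∧ c w = c v}).ncard :=
              ncard_mono hsub
          _ ≤ {w | (G.deleteEdges {s(x,v)}).Adj v w ∧ c w = c v}.ncard + 1 :=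
              Set.ncard_insert_le _ _
          _ ≤ c v := hsy'
      · have hsub : {w | G.Adj v w ∧ c w = c v}
            ⊆ {w | (G.deleteEdges {s(x,y)}).Adj v w ∧ c w = c v} := by
          rintro w ⟨hw, hcw⟩
          refine ⟨SimpleGraph.deleteEdges_adj.mpr ⟨hw, ?_⟩, hcw⟩
          simp only [Set.mem_singleton_iff, Sym2.eq_iff]
          rintro (⟨rfl, rfl⟩ | ⟨rfl, rfl⟩)
          · exact hvx rfl
          · exact hvy rfl
        exact le_trans (ncard_mono hsub) (hc.2 v)
  · exact absurd ⟨c, extend34 G x y c hc hne⟩ hnc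

end Helpers

section Lems
variable {V : Type*} [Fintype V] [DecidableEq V]

lemma adj_del (G : SimpleGraph V) (p q a b : V) :
    (G.deleteEdges {s(p,q)}).Adj a b ↔
      G.Adj a b ∧ ¬(a = p ∧ b = q) ∧ ¬(a = q ∧ b = p) := by
  simp only [SimpleGraph.deleteEdges_adj, Set.mem_singleton_iff, Sym2.eq_iff]
  tauto

lemma lemA_aux (G : SimpleGraph V) (hnc : ¬ Colorable34 G)
    (x y : V) (hxy : G.Adj x y) (hx5 : degN G x = 5)
    (hxlow : ∀ w, G.Adj x w → w ≠ y → degN G w ≤ 2)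
    (c : V → ℕ) (hc : IsColoring34 (G.deleteEdges {s(x,y)}) c)
    (hcxy : c x = c y)
    (hsat : {w | (G.deleteEdges {s(x,y)}).Adj x w ∧ c w = c x}.ncard = c x) :
    False := by
  set H := G.deleteEdges {s(x,y)} with hH
  have hHx : ∀ w, H.Adj x w ↔ G.Adj x w ∧ w ≠ y := by
    intro w
    rw [hH, adj_del]
    constructor
    · rintro ⟨h, h1, -⟩
      exact ⟨h, fun e => h1 ⟨rfl, e⟩⟩
    · rintro ⟨h, hne⟩
      refine ⟨h, ?_, ?_⟩
      · rintro ⟨-, rfl⟩; exact hne rfl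
      · rintro ⟨rfl, rfl⟩; exact hne (G.loopless.irrefl _ h).elim
  have hNH : {w | H.Adj x w} = {w | G.Adj x w} \ {y} := by
    ext w; simp only [Set.mem_setOf_eq, Set.mem_diff, Set.mem_singleton_iff, hHx]
  have hNHcard : {w | H.Adj x w}.ncard = 4 := by
    rw [hNH, Set.ncard_diff_singleton_of_mem (show y ∈ {w | G.Adj x w} from hxy),
      show {w | G.Adj x w}.ncard = 5 from hx5]
  have hlow : ∀ w, H.Adj x w → ∀ j, {t | H.Adj w t ∧ c t = j}.ncard < 3 := by
    intro w hw j
    have hw' := (hHx w).1 hw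
    have hd : degN G w ≤ 2 := hxlow w hw'.1 hw'.2
    have hsub : {t | H.Adj w t ∧ c t = j} ⊆ {t | G.Adj w t} := by
      rintro t ⟨ht, -⟩
      exact ((adj_del G x y w t).1 ht).1
    calc {t | H.Adj w t ∧ c t = j}.ncard ≤ {t | G.Adj w t}.ncard := ncard_mono hsub
      _ ≤ 2 := hd
      _ < 3 := by omega
  rcases hc.1 x with hx3 | hx4
  · -- c x = 3: recolor x to 4
    have hcol := recolor34 H c hc x 4 (Or.inr rfl) (by omega)
      (by
        refine le_trans (ncard_mono ?_) (le_trans (le_of_eq hNHcard) (by omega))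
        rintro w ⟨hw, -⟩; exact hw)
      (fun w hw hcw => lt_trans (hlow w hw 4) (by omega))
    apply hnc
    refine ⟨Function.update c x 4, extend34 G x y _ hcol ?_⟩
    rw [Function.update_self, Function.update_of_ne (Ne.symm hxy.ne)]
    omega
  · -- c x = 4: all H-neighbors of x are colored 4
    have hall : {w | H.Adj x w ∧ c w = 4} = {w | H.Adj x w} := by
      apply Set.eq_of_subset_of_ncard_le
      · rintro w ⟨hw, -⟩; exact hw
      · rw [hNHcard]
        rw [hx4] at hsat
        exact le_of_eq hsat.symm
      · exact Set.toFinite _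
    have hc4 : ∀ w, H.Adj x w → c w = 4 := by
      intro w hw
      exact (hall.symm ▸ hw : w ∈ {w | H.Adj x w ∧ c w = 4}).2
    have hempty : {w | H.Adj x w ∧ c w = 3} = ∅ := by
      ext w
      simp only [Set.mem_setOf_eq, Set.mem_empty_iff_false, iff_false]
      rintro ⟨hw, hcw⟩
      have := hc4 w hw
      omega
    have hcol := recolor34 H c hc x 3 (Or.inl rfl) (by omega)
      (by rw [hempty]; simp)
      (fun w hw hcw => by
        exfalso
        have := hc4 w hw
        omega)
    apply hnc
    refine ⟨Function.update c x 3, extend34 G x y _ hcol ?_⟩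
    rw [Function.update_self, Function.update_of_ne (Ne.symm hxy.ne)]
    omega

lemma lemA (G : SimpleGraph V) (hnc : ¬ Colorable34 G)
    (hmin : ∀ e ∈ G.edgeSet, Colorable34 (G.deleteEdges {e}))
    (x y : V) (hxy : G.Adj x y) (hx5 : degN G x = 5) (hy5 : degN G y = 5)
    (hxlow : ∀ w, G.Adj x w → w ≠ y → degN G w ≤ 2)
    (hylow : ∀ w, G.Adj y w → w ≠ x → degN G w ≤ 2) : False := by
  obtain ⟨c, hc⟩ := hmin s(x,y) ((SimpleGraph.mem_edgeSet G).2 hxy)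
  obtain ⟨hcc, hsat⟩ := break34 G hnc x y hxy c hc
  rcases hsat with h | h
  · exact lemA_aux G hnc x y hxy hx5 hxlow c hc hcc h
  · have hswap : s(x,y) = s(y,x) := Sym2.eq_swap
    have hc' : IsColoring34 (G.deleteEdges {s(y,x)}) c := by rwa [hswap] at hc
    have h' : {w | (G.deleteEdges {s(y,x)}).Adj y w ∧ c w = c y}.ncard = c y := by
      rw [hswap] at h; exact h
    exact lemA_aux G hnc y x hxy.symm hy5 hylow c hc' hcc.symm h'

lemma lemB (G : SimpleGraph V) (hnc : ¬ Colorable34 G)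
    (hmin : ∀ e ∈ G.edgeSet, Colorable34 (G.deleteEdges {e}))
    (v x z : V) (hvx : G.Adj v x) (hvz : G.Adj v z) (hxz : x ≠ z)
    (hnadj : ¬ G.Adj x z) (hdv : degN G v = 2) (hdx : degN G x = 5)
    (hdz : degN G z = 5) : False := by
  set H := G.deleteEdges {s(v,x)} with hH
  have hvne : v ≠ x := hvx.ne
  have hvnez : v ≠ z := hvz.ne
  -- neighborhood of v in G is {x, z}
  have hNv : {w | G.Adj v w} = {x, z} := by
    symm
    apply Set.eq_of_subset_of_ncard_le
    · rintro w (rfl | rfl)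
      · exact hvx
      · exact hvz
    · rw [show {w | G.Adj v w}.ncard = 2 from hdv, Set.ncard_pair hxz]
    · exact Set.toFinite _
  have hNHv : ∀ w, H.Adj v w ↔ w = z := by
    intro w
    rw [hH, adj_del]
    constructor
    · rintro ⟨hw, h1, -⟩
      have hmem : w ∈ ({x, z} : Set V) := hNv ▸ hw
      rcases hmem with rfl | rfl
      · exact absurd ⟨rfl, rfl⟩ h1
      · rfl
    · rintro rfl
      refine ⟨hvz, ?_, ?_⟩
      · rintro ⟨-, rfl⟩; exact hxz rfl
      · rintro ⟨rfl, -⟩; exact hvne rfl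
  have hsmallv : ∀ (c : V → ℕ) (j : ℕ), {w | H.Adj v w ∧ c w = j}.ncard ≤ 1 := by
    intro c j
    have hsub : {w | H.Adj v w ∧ c w = j} ⊆ {z} := by
      rintro w ⟨hw, -⟩
      exact (hNHv w).1 hw
    calc _ ≤ ({z} : Set V).ncard := ncard_mono hsub
      _ = 1 := Set.ncard_singleton z
  -- neighborhood of x in H
  have hHx : ∀ w, H.Adj x w ↔ G.Adj x w ∧ w ≠ v := by
    intro w
    rw [hH, adj_del]
    constructor
    · rintro ⟨h, -, h2⟩
      exact ⟨h, fun e => h2 ⟨rfl, e⟩⟩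
    · rintro ⟨h, hne⟩
      refine ⟨h, ?_, ?_⟩
      · rintro ⟨rfl, rfl⟩; exact hvne rfl
      · rintro ⟨-, rfl⟩; exact hne rfl
  have hNHx : {w | H.Adj x w} = {w | G.Adj x w} \ {v} := by
    ext w; simp only [Set.mem_setOf_eq, Set.mem_diff, Set.mem_singleton_iff, hHx]
  have hNHxcard : {w | H.Adj x w}.ncard = 4 := by
    rw [hNHx, Set.ncard_diff_singleton_of_mem (show v ∈ {w | G.Adj x w} from hvx.symm)
      , show {w | G.Adj x w}.ncard = 5 from hdx]
  -- neighborhood of z in H equals that in G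
  have hHz : ∀ w, H.Adj z w ↔ G.Adj z w := by
    intro w
    rw [hH, adj_del]
    constructor
    · rintro ⟨h, -, -⟩; exact h
    · intro h
      refine ⟨h, ?_, ?_⟩
      · rintro ⟨rfl, -⟩; exact hvnez rfl
      · rintro ⟨rfl, -⟩; exact hxz rfl
  -- get a coloring of H
  obtain ⟨c, hc⟩ := hmin s(v,x) ((SimpleGraph.mem_edgeSet G).2 hvx)
  obtain ⟨hcc, hsat⟩ := break34 G hnc v x hvx c hc
  -- v cannot be saturated
  have hsatx : {w | H.Adj x w ∧ c w = c x}.ncard = c x := by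
    rcases hsat with h | h
    · exfalso
      have h1 := hsmallv c (c v)
      rw [← hH] at h
      rcases hc.1 v with h3 | h3 <;> omega
    · rw [← hH] at h; exact h
  rcases hc.1 x with hx3 | hx4
  swap
  · -- c x = 4: all H-neighbors of x colored 4, recolor x to 3
    have hall : {w | H.Adj x w ∧ c w = 4} = {w | H.Adj x w} := by
      apply Set.eq_of_subset_of_ncard_le
      · rintro w ⟨hw, -⟩; exact hw
      · rw [hx4] at hsatx
        rw [hNHxcard]
        exact le_of_eq hsatx.symm
      · exact Set.toFinite _
    have hc4 : ∀ w, H.Adj x w → c w = 4 := fun w hw =>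
      (hall.symm ▸ hw : w ∈ {w | H.Adj x w ∧ c w = 4}).2
    have hcol := recolor34 H c hc x 3 (Or.inl rfl) (by omega)
      (by
        have hempty : {w | H.Adj x w ∧ c w = 3} = ∅ := by
          ext w
          simp only [Set.mem_setOf_eq, Set.mem_empty_iff_false, iff_false]
          rintro ⟨hw, hcw⟩
          have := hc4 w hw
          omega
        rw [hempty]; simp)
      (fun w hw hcw => by
        exfalso; have := hc4 w hw; omega)
    apply hnc
    refine ⟨Function.update c x 3, extend34 G v x _ hcol ?_⟩
    rw [Function.update_self, Function.update_of_ne hvne]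
    omega
  · -- c x = 3, so c v = 3
    have hcv3 : c v = 3 := by rw [hcc, hx3]
    -- step: z must be colored 4 and 4-saturated
    by_cases hz4 : c z = 4 ∧ {t | H.Adj z t ∧ c t = 4}.ncard = 4
    · obtain ⟨hz4c, hz4s⟩ := hz4
      -- the 3-colored H-neighbors of z form exactly {v}
      have hNHzcard : {w | H.Adj z w}.ncard = 5 := by
        have : {w | H.Adj z w} = {w | G.Adj z w} := by
          ext w; simp only [Set.mem_setOf_eq, hHz]
        rw [this, show {w | G.Adj z w}.ncard = 5 from hdz]
      have hpart : {w | H.Adj z w ∧ c w = 3}.ncard + {w | H.Adj z w ∧ c w = 4}.ncard = 5 := by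
        have hunion : {w | H.Adj z w ∧ c w = 3} ∪ {w | H.Adj z w ∧ c w = 4} = {w | H.Adj z w} := by
          ext w
          simp only [Set.mem_union, Set.mem_setOf_eq]
          constructor
          · rintro (⟨h, -⟩ | ⟨h, -⟩) <;> exact h
          · intro h
            rcases hc.1 w with h3 | h3
            · exact Or.inl ⟨h, h3⟩
            · exact Or.inr ⟨h, h3⟩
        have hdisj : Disjoint {w | H.Adj z w ∧ c w = 3} {w | H.Adj z w ∧ c w = 4} := by
          rw [Set.disjoint_left]
          rintro w ⟨-, h3⟩ ⟨-, h4⟩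
          omega
        rw [← hNHzcard, ← hunion, Set.ncard_union_eq hdisj (Set.toFinite _) (Set.toFinite _)]
      have h3card : {w | H.Adj z w ∧ c w = 3}.ncard = 1 := by omega
      have hvz' : H.Adj z v := by
        rw [hHz]; exact hvz.symm
      have h3set : {w | H.Adj z w ∧ c w = 3} = {v} := by
        symm
        apply Set.eq_of_subset_of_ncard_le
        · rintro w rfl
          exact ⟨hvz', hcv3⟩
        · rw [h3card, Set.ncard_singleton]
        · exact Set.toFinite _
      -- recolor z to 3
      have hcol1 := recolor34 H c hc z 3 (Or.inl rfl) (by omega)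
        (by rw [h3card]; omega)
        (fun t ht hct => by
          have : t ∈ {w | H.Adj z w ∧ c w = 3} := ⟨ht, hct⟩
          rw [h3set] at this
          rcases this with rfl
          have := hsmallv c 3
          omega)
      set c1 := Function.update c z 3 with hc1
      have hc1v : c1 v = 3 := by rw [hc1, Function.update_of_ne hvnez, hcv3]
      have hc1x : c1 x = 3 := by rw [hc1, Function.update_of_ne hxz, hx3]
      have hc1z : c1 z = 3 := by rw [hc1, Function.update_self]
      -- recolor v to 4
      have hcol2 := recolor34 H c1 hcol1 v 4 (Or.inr rfl) (by omega)
        (by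
          have hsub : {w | H.Adj v w ∧ c1 w = 4} ⊆ {z} := by
            rintro w ⟨hw, -⟩
            exact (hNHv w).1 hw
          calc _ ≤ ({z} : Set V).ncard := ncard_mono hsub
            _ ≤ 4 := by rw [Set.ncard_singleton]; omega)
        (fun w hw hcw => by
          exfalso
          have := (hNHv w).1 hw
          subst this
          omega)
      apply hnc
      refine ⟨Function.update c1 v 4, extend34 G v x _ hcol2 ?_⟩
      rw [Function.update_self, Function.update_of_ne (Ne.symm hvne), hc1x]
      omega
    · -- z not 4-saturated: recolor v to 4 directly
      have hcol := recolor34 H c hc v 4 (Or.inr rfl) (by omega)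
        (le_trans (hsmallv c 4) (by omega))
        (fun w hw hcw => by
          have hwz := (hNHv w).1 hw
          subst hwz
          have hle : {t | H.Adj w t ∧ c t = 4}.ncard ≤ 4 := by
            have := hc.2 w
            rw [hcw] at this
            exact this
          rcases lt_or_eq_of_le hle with h | h
          · exact h
          · exact absurd ⟨hcw, h⟩ hz4)
      apply hnc
      refine ⟨Function.update c v 4, extend34 G v x _ hcol ?_⟩
      rw [Function.update_self, Function.update_of_ne (Ne.symm hvne)]
      omega

end Lems

section Main
variable {V : Type*} [Fintype V]

lemma ncard_sep_insert (a : V) (s : Set V) (P : V → Prop) [Decidable (P a)] (ha : a ∉ s) :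
    {x ∈ insert a s | P x}.ncard = (if P a then 1 else 0) + {x ∈ s | P x}.ncard := by
  by_cases hPa : P a
  · rw [if_pos hPa]
    have he : {x ∈ insert a s | P x} = insert a {x ∈ s | P x} := by
      ext x
      constructor
      · rintro ⟨(rfl | hx), hP⟩
        · exact Set.mem_insert _ _
        · exact Set.mem_insert_of_mem _ ⟨hx, hP⟩
      · rintro (rfl | ⟨hx, hP⟩)
        · exact ⟨Set.mem_insert _ _, hPa⟩
        · exact ⟨Set.mem_insert_of_mem _ hx, hP⟩
    rw [he, Set.ncard_insert_of_notMem (fun h => ha h.1) (Set.toFinite _)]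
    omega
  · rw [if_neg hPa]
    have he : {x ∈ insert a s | P x} = {x ∈ s | P x} := by
      ext x
      constructor
      · rintro ⟨(rfl | hx), hP⟩
        · exact absurd hP hPa
        · exact ⟨hx, hP⟩
      · rintro ⟨hx, hP⟩
        exact ⟨Set.mem_insert_of_mem _ hx, hP⟩
    rw [he]
    omega

lemma ncard_sep_empty (P : V → Prop) : {x ∈ (∅ : Set V) | P x}.ncard = 0 := by
  simp

lemma deg_ge2 (G : SimpleGraph V) (x a b : V) (hab : a ≠ b)
    (hxa : G.Adj x a) (hxb : G.Adj x b) : 2 ≤ degN G x := by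
  have hsub : {a, b} ⊆ {w | G.Adj x w} := by
    rintro t (rfl | rfl)
    · exact hxa
    · exact hxb
  have := ncard_mono hsub
  rw [Set.ncard_pair hab] at this
  exact this

lemma deg2_nbr (G : SimpleGraph V) (x a b : V) (hab : a ≠ b)
    (hxa : G.Adj x a) (hxb : G.Adj x b)
    (ha2 : 2 ≤ degN G a) (hb2 : 2 ≤ degN G b) (h5 : Is5p G x) :
    degN G a = 2 ∨ degN G b = 2 := by
  by_contra hcon
  push_neg at hcon
  have hsub : {a, b} ⊆ {w | G.Adj x w ∧ 3 ≤ degN G w} := by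
    rintro t (rfl | rfl)
    · exact ⟨hxa, by omega⟩
    · exact ⟨hxb, by omega⟩
  have hm := ncard_mono hsub
  rw [Set.ncard_pair hab] at hm
  have h1 := h5.2
  unfold tpn at h1
  omega

lemma low_of_5p (G : SimpleGraph V) (x y : V) (h5 : Is5p G x) (hxy : G.Adj x y)
    (hy : 3 ≤ degN G y) : ∀ w, G.Adj x w → w ≠ y → degN G w ≤ 2 := by
  intro w hw hwy
  by_contra hcon
  push_neg at hcon
  have hsub : {y, w} ⊆ {t | G.Adj x t ∧ 3 ≤ degN G t} := by
    rintro t (rfl | rfl)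
    · exact ⟨hxy, hy⟩
    · exact ⟨hw, by omega⟩
  have hm := ncard_mono hsub
  rw [Set.ncard_pair (Ne.symm hwy)] at hm
  have h1 := h5.2
  unfold tpn at h1
  omega

end Main

set_option maxRecDepth 40000 in
set_option synthInstance.maxSize 4000 in
set_option synthInstance.maxHeartbeats 2000000 in
set_option maxHeartbeats 4000000 in
lemma keyCombo (b1 b2 b3 b4 b5 b6 q1 q2 q3 q4 q5 q6 : Bool)
    (hb : (if b1 then 1 else 0) + (if b2 then 1 else 0) + (if b3 then 1 else 0)
        + (if b4 then 1 else 0) + (if b5 then 1 else 0) + (if b6 then 1 else 0) ≤ 2)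
    (hq : 3 ≤ (if q1 then 1 else 0) + (if q2 then 1 else 0) + (if q3 then 1 else 0)
        + (if q4 then 1 else 0) + (if q5 then 1 else 0) + (if q6 then 1 else 0))
    (h1 : q1 → ¬ b1) (h2 : q2 → ¬ b2) (h3 : q3 → ¬ b3)
    (h4 : q4 → ¬ b4) (h5 : q5 → ¬ b5) (h6 : q6 → ¬ b6)
    (n1 : q1 → (b6 ∨ b2)) (n2 : q2 → (b1 ∨ b3)) (n3 : q3 → (b2 ∨ b4))
    (n4 : q4 → (b3 ∨ b5)) (n5 : q5 → (b4 ∨ b6)) (n6 : q6 → (b5 ∨ b1)) :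
    ((q1 ∧ q2) ∨ (q2 ∧ q3) ∨ (q3 ∧ q4) ∨ (q4 ∧ q5) ∨ (q5 ∧ q6) ∨ (q6 ∧ q1)) ∨
    ((q1 ∧ b2 ∧ q3) ∨ (q2 ∧ b3 ∧ q4) ∨ (q3 ∧ b4 ∧ q5) ∨ (q4 ∧ b5 ∧ q6) ∨
     (q5 ∧ b6 ∧ q1) ∨ (q6 ∧ b1 ∧ q2)) := by
  revert hb hq h1 h2 h3 h4 h5 h6 n1 n2 n3 n4 n5 n6
  revert b1 b2 b3 b4 b5 b6 q1 q2 q3 q4 q5 q6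
  decide

lemma keyComboP (B1 B2 B3 B4 B5 B6 Q1 Q2 Q3 Q4 Q5 Q6 : Prop)
    [Decidable B1] [Decidable B2] [Decidable B3] [Decidable B4] [Decidable B5] [Decidable B6]
    [Decidable Q1] [Decidable Q2] [Decidable Q3] [Decidable Q4] [Decidable Q5] [Decidable Q6]
    (hb : (if B1 then 1 else 0) + (if B2 then 1 else 0) + (if B3 then 1 else 0)
        + (if B4 then 1 else 0) + (if B5 then 1 else 0) + (if B6 then 1 else 0) ≤ 2)
    (hq : 3 ≤ (if Q1 then 1 else 0) + (if Q2 then 1 else 0) + (if Q3 then 1 else 0)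
        + (if Q4 then 1 else 0) + (if Q5 then 1 else 0) + (if Q6 then 1 else 0))
    (h1 : Q1 → ¬ B1) (h2 : Q2 → ¬ B2) (h3 : Q3 → ¬ B3)
    (h4 : Q4 → ¬ B4) (h5 : Q5 → ¬ B5) (h6 : Q6 → ¬ B6)
    (n1 : Q1 → (B6 ∨ B2)) (n2 : Q2 → (B1 ∨ B3)) (n3 : Q3 → (B2 ∨ B4))
    (n4 : Q4 → (B3 ∨ B5)) (n5 : Q5 → (B4 ∨ B6)) (n6 : Q6 → (B5 ∨ B1)) :
    ((Q1 ∧ Q2) ∨ (Q2 ∧ Q3) ∨ (Q3 ∧ Q4) ∨ (Q4 ∧ Q5) ∨ (Q5 ∧ Q6) ∨ (Q6 ∧ Q1)) ∨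
    ((Q1 ∧ B2 ∧ Q3) ∨ (Q2 ∧ B3 ∧ Q4) ∨ (Q3 ∧ B4 ∧ Q5) ∨ (Q4 ∧ B5 ∧ Q6) ∨
     (Q5 ∧ B6 ∧ Q1) ∨ (Q6 ∧ B1 ∧ Q2)) := by
  have key := keyCombo (decide B1) (decide B2) (decide B3) (decide B4) (decide B5) (decide B6)
    (decide Q1) (decide Q2) (decide Q3) (decide Q4) (decide Q5) (decide Q6)
    (by simpa using hb) (by simpa using hq)
    (by simpa using h1) (by simpa using h2) (by simpa using h3)
    (by simpa using h4) (by simpa using h5) (by simpa using h6)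
    (by simpa using n1) (by simpa using n2) (by simpa using n3)
    (by simpa using n4) (by simpa using n5) (by simpa using n6)
  simpa using key

/-- In a minimally non-(3,4)-colorable graph of girth at least 5, if
exactly two vertices of a 6-cycle have degree 2, then at most two of its vertices
are 5p-vertices. -/
theorem stmt_10 {V : Type*} [Fintype V] (G : SimpleGraph V)
    (hG : MinNonColorable34 G) (hgirth : GirthAtLeast5 G)
    (u1 u2 u3 u4 u5 u6 : V)
    (hnd : ([u1, u2, u3, u4, u5, u6] : List V).Nodup)
    (a12 : G.Adj u1 u2) (a23 : G.Adj u2 u3) (a34 : G.Adj u3 u4)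
    (a45 : G.Adj u4 u5) (a56 : G.Adj u5 u6) (a61 : G.Adj u6 u1)
    (h2 : {x ∈ ({u1, u2, u3, u4, u5, u6} : Set V) | degN G x = 2}.ncard = 2) :
    {x ∈ ({u1, u2, u3, u4, u5, u6} : Set V) | Is5p G x}.ncard ≤ 2 := by
  classical
  by_contra hcon
  push_neg at hcon
  simp only [List.nodup_cons, List.mem_cons, List.mem_singleton, List.not_mem_nil, or_false,
    not_or, List.nodup_nil, and_true] at hnd
  obtain ⟨⟨h12, h13, h14, h15, h16⟩, ⟨h23, h24, h25, h26⟩, ⟨h34, h35, h36⟩, ⟨h45, h46⟩, h56⟩ := hnd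
  have hcount : ∀ P : V → Prop, {x ∈ ({u1, u2, u3, u4, u5, u6} : Set V) | P x}.ncard =
      (if P u1 then 1 else 0) + (if P u2 then 1 else 0) + (if P u3 then 1 else 0)
      + (if P u4 then 1 else 0) + (if P u5 then 1 else 0) + (if P u6 then 1 else 0) := by
    intro P
    rw [ncard_sep_insert u1 _ P (by simp [h12, h13, h14, h15, h16]),
        ncard_sep_insert u2 _ P (by simp [h23, h24, h25, h26]),
        ncard_sep_insert u3 _ P (by simp [h34, h35, h36]),
        ncard_sep_insert u4 _ P (by simp [h45, h46]),
        ncard_sep_insert u5 _ P (by simp [h56]),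
        show ({u6} : Set V) = insert u6 ∅ by simp,
        ncard_sep_insert u6 ∅ P (by simp), ncard_sep_empty]
    omega
  have hbsum := hcount (fun x => degN G x = 2)
  rw [h2] at hbsum
  have hbsum' : 2 = (if degN G u1 = 2 then 1 else 0) + (if degN G u2 = 2 then 1 else 0)
      + (if degN G u3 = 2 then 1 else 0) + (if degN G u4 = 2 then 1 else 0)
      + (if degN G u5 = 2 then 1 else 0) + (if degN G u6 = 2 then 1 else 0) := by
    convert hbsum using 10 <;> first | rfl | exact Subsingleton.elim _ _
  have hqsum := hcount (fun x => Is5p G x)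
  rw [hqsum] at hcon
  have hqsum' : 2 < (if Is5p G u1 then 1 else 0) + (if Is5p G u2 then 1 else 0)
      + (if Is5p G u3 then 1 else 0) + (if Is5p G u4 then 1 else 0)
      + (if Is5p G u5 then 1 else 0) + (if Is5p G u6 then 1 else 0) := by
    convert hcon using 10 <;> first | rfl | exact Subsingleton.elim _ _
  -- degrees at least 2 on the cycle
  have hd1 : 2 ≤ degN G u1 := deg_ge2 G u1 u2 u6 h26 a12 a61.symm
  have hd2 : 2 ≤ degN G u2 := deg_ge2 G u2 u1 u3 h13 a12.symm a23
  have hd3 : 2 ≤ degN G u3 := deg_ge2 G u3 u2 u4 h24 a23.symm a34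
  have hd4 : 2 ≤ degN G u4 := deg_ge2 G u4 u3 u5 h35 a34.symm a45
  have hd5 : 2 ≤ degN G u5 := deg_ge2 G u5 u4 u6 h46 a45.symm a56
  have hd6 : 2 ≤ degN G u6 := deg_ge2 G u6 u5 u1 (Ne.symm h15) a56.symm a61
  -- a 5p-vertex has a degree-2 cycle-neighbor
  have N1 : Is5p G u1 → degN G u6 = 2 ∨ degN G u2 = 2 :=
    deg2_nbr G u1 u6 u2 (Ne.symm h26) a61.symm a12 hd6 hd2
  have N2 : Is5p G u2 → degN G u1 = 2 ∨ degN G u3 = 2 :=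
    deg2_nbr G u2 u1 u3 h13 a12.symm a23 hd1 hd3
  have N3 : Is5p G u3 → degN G u2 = 2 ∨ degN G u4 = 2 :=
    deg2_nbr G u3 u2 u4 h24 a23.symm a34 hd2 hd4
  have N4 : Is5p G u4 → degN G u3 = 2 ∨ degN G u5 = 2 :=
    deg2_nbr G u4 u3 u5 h35 a34.symm a45 hd3 hd5
  have N5 : Is5p G u5 → degN G u4 = 2 ∨ degN G u6 = 2 :=
    deg2_nbr G u5 u4 u6 h46 a45.symm a56 hd4 hd6
  have N6 : Is5p G u6 → degN G u5 = 2 ∨ degN G u1 = 2 :=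
    deg2_nbr G u6 u5 u1 (Ne.symm h15) a56.symm a61 hd5 hd1
  have E1 : Is5p G u1 → ¬ degN G u1 = 2 := fun h h' => by have := h.1; omega
  have E2 : Is5p G u2 → ¬ degN G u2 = 2 := fun h h' => by have := h.1; omega
  have E3 : Is5p G u3 → ¬ degN G u3 = 2 := fun h h' => by have := h.1; omega
  have E4 : Is5p G u4 → ¬ degN G u4 = 2 := fun h h' => by have := h.1; omega
  have E5 : Is5p G u5 → ¬ degN G u5 = 2 := fun h h' => by have := h.1; omega
  have E6 : Is5p G u6 → ¬ degN G u6 = 2 := fun h h' => by have := h.1; omega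
  have hkey := keyComboP (degN G u1 = 2) (degN G u2 = 2) (degN G u3 = 2) (degN G u4 = 2)
    (degN G u5 = 2) (degN G u6 = 2) (Is5p G u1) (Is5p G u2) (Is5p G u3) (Is5p G u4)
    (Is5p G u5) (Is5p G u6) (by omega) (by omega) E1 E2 E3 E4 E5 E6 N1 N2 N3 N4 N5 N6
  have hA : ∀ x y : V, G.Adj x y → Is5p G x → Is5p G y → False := by
    intro x y hxy hx hy
    exact lemA G hG.1 hG.2.2 x y hxy hx.1 hy.1
      (low_of_5p G x y hx hxy (by have := hy.1; omega))
      (low_of_5p G y x hy hxy.symm (by have := hx.1; omega))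
  rcases hkey with (⟨hq, hq'⟩ | ⟨hq, hq'⟩ | ⟨hq, hq'⟩ | ⟨hq, hq'⟩ | ⟨hq, hq'⟩ | ⟨hq, hq'⟩) |
    (⟨hq, hb, hq'⟩ | ⟨hq, hb, hq'⟩ | ⟨hq, hb, hq'⟩ | ⟨hq, hb, hq'⟩ | ⟨hq, hb, hq'⟩ | ⟨hq, hb, hq'⟩)
  · exact hA u1 u2 a12 hq hq'
  · exact hA u2 u3 a23 hq hq'
  · exact hA u3 u4 a34 hq hq'
  · exact hA u4 u5 a45 hq hq'
  · exact hA u5 u6 a56 hq hq'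
  · exact hA u6 u1 a61 hq hq'
  · exact lemB G hG.1 hG.2.2 u2 u1 u3 a12.symm a23 h13
      (fun h => hgirth.1 u1 u2 u3 a12 a23 h.symm) hb hq.1 hq'.1
  · exact lemB G hG.1 hG.2.2 u3 u2 u4 a23.symm a34 h24
      (fun h => hgirth.1 u2 u3 u4 a23 a34 h.symm) hb hq.1 hq'.1
  · exact lemB G hG.1 hG.2.2 u4 u3 u5 a34.symm a45 h35
      (fun h => hgirth.1 u3 u4 u5 a34 a45 h.symm) hb hq.1 hq'.1
  · exact lemB G hG.1 hG.2.2 u5 u4 u6 a45.symm a56 h46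
      (fun h => hgirth.1 u4 u5 u6 a45 a56 h.symm) hb hq.1 hq'.1
  · exact lemB G hG.1 hG.2.2 u6 u5 u1 a56.symm a61 (Ne.symm h15)
      (fun h => hgirth.1 u5 u6 u1 a56 a61 h.symm) hb hq.1 hq'.1
  · exact lemB G hG.1 hG.2.2 u1 u6 u2 a61.symm a12 (Ne.symm h26)
      (fun h => hgirth.1 u6 u1 u2 a61 a12 h.symm) hb hq.1 hq'.1
end

section
/- Let G be a minimally non-(3,4)-colorable graph with girth at least 5, and let C = u_1 u_2 u_3 u_4 u_5 u_6 be a 6-cycle in G such that exactly two of the vertices u_1, ..., u_6 have degree 2 and exactly one of them is a 5p-vertex. Then at most two of the vertices u_1, ..., u_6 are 5s-vertices or 6p-vertices. -/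
set_option linter.unusedSectionVars false

namespace Stmt11Aux

variable {V : Type*} [Fintype V] [DecidableEq V]

/-- Flip one vertex `p` to color `j`. -/
lemma flip1 (H : SimpleGraph V) (c : V → ℕ) (hc : IsColoring34 H c) (p : V) (j : ℕ)
    (hj : j = 3 ∨ j = 4)
    (hown : {w | H.Adj p w ∧ c w = j}.ncard ≤ j)
    (hsafe : ∀ w, H.Adj p w → c w = j → {z | H.Adj w z ∧ c z = j}.ncard < j) :
    IsColoring34 H (Function.update c p j) := by
  set c' := Function.update c p j with hc'
  have hcp : c' p = j := Function.update_self p j c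
  have hco : ∀ w, w ≠ p → c' w = c w := fun w hw => Function.update_of_ne hw j c
  constructor
  · intro v
    by_cases hv : v = p
    · subst hv; rw [hcp]; exact hj
    · rw [hco v hv]; exact hc.1 v
  · intro v
    by_cases hv : v = p
    · subst hv
      rw [hcp]
      have hset : {w | H.Adj v w ∧ c' w = j} = {w | H.Adj v w ∧ c w = j} := by
        ext w
        simp only [Set.mem_setOf_eq, and_congr_right_iff]
        intro hw
        rw [hco w (fun h => H.irrefl (h ▸ hw))]
      rw [hset]; exact hown
    · rw [hco v hv]
      by_cases hcv : c v = j
      · by_cases hadj : H.Adj v p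
        · have hlt := hsafe v hadj.symm hcv
          have hsub : {w | H.Adj v w ∧ c' w = c v} ⊆
              insert p {w | H.Adj v w ∧ c w = c v} := by
            intro w ⟨hw1, hw2⟩
            by_cases hwp : w = p
            · exact Or.inl hwp
            · exact Or.inr ⟨hw1, (hco w hwp) ▸ hw2⟩
          calc {w | H.Adj v w ∧ c' w = c v}.ncard
              ≤ (insert p {w | H.Adj v w ∧ c w = c v}).ncard :=
                Set.ncard_le_ncard hsub (Set.toFinite _)
            _ ≤ {w | H.Adj v w ∧ c w = c v}.ncard + 1 := Set.ncard_insert_le _ _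
            _ ≤ c v := by rw [hcv]; omega
        · have hsub : {w | H.Adj v w ∧ c' w = c v} ⊆ {w | H.Adj v w ∧ c w = c v} := by
            intro w ⟨hw1, hw2⟩
            have hwp : w ≠ p := fun h => hadj (h ▸ hw1)
            exact ⟨hw1, (hco w hwp) ▸ hw2⟩
          exact le_trans (Set.ncard_le_ncard hsub (Set.toFinite _)) (hc.2 v)
      · have hsub : {w | H.Adj v w ∧ c' w = c v} ⊆ {w | H.Adj v w ∧ c w = c v} := by
          intro w ⟨hw1, hw2⟩
          have hwp : w ≠ p := by
            intro h; subst h; rw [hcp] at hw2; exact hcv hw2.symm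
          exact ⟨hw1, (hco w hwp) ▸ hw2⟩
        exact le_trans (Set.ncard_le_ncard hsub (Set.toFinite _)) (hc.2 v)

/-- Swap adjacent pair: `p` from 3 to 4, `q` from 4 to 3. -/
lemma flip2 (H : SimpleGraph V) (c : V → ℕ) (hc : IsColoring34 H c) (p q : V)
    (hadj : H.Adj p q) (hcp : c p = 3) (hcq : c q = 4)
    (hpown : {w | H.Adj p w ∧ c w = 4}.ncard ≤ 5)
    (hqown : {w | H.Adj q w ∧ c w = 3}.ncard ≤ 4)
    (hsafe4 : ∀ w, H.Adj p w → w ≠ q → c w = 4 → {z | H.Adj w z ∧ c z = 4}.ncard < 4)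
    (hsafe3 : ∀ w, H.Adj q w → w ≠ p → c w = 3 → {z | H.Adj w z ∧ c z = 3}.ncard < 3) :
    IsColoring34 H (Function.update (Function.update c p 4) q 3) := by
  have hpq : p ≠ q := hadj.ne
  set c' := Function.update (Function.update c p 4) q 3 with hc'
  have hcp' : c' p = 4 := by
    rw [hc', Function.update_of_ne hpq, Function.update_self]
  have hcq' : c' q = 3 := Function.update_self q 3 _
  have hco : ∀ w, w ≠ p → w ≠ q → c' w = c w := by
    intro w hwp hwq
    rw [hc', Function.update_of_ne hwq, Function.update_of_ne hwp]
  constructor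
  · intro v
    by_cases hv : v = p
    · subst hv; rw [hcp']; right; rfl
    by_cases hv' : v = q
    · subst hv'; rw [hcq']; left; rfl
    · rw [hco v hv hv']; exact hc.1 v
  · intro v
    by_cases hv : v = p
    · subst hv
      rw [hcp']
      have hsub : {w | H.Adj v w ∧ c' w = 4} ⊆ {w | H.Adj v w ∧ c w = 4} \ {q} := by
        intro w ⟨hw1, hw2⟩
        have hwq : w ≠ q := by intro h; subst h; rw [hcq'] at hw2; omega
        have hwp : w ≠ v := fun h => H.irrefl (h ▸ hw1)
        exact ⟨⟨hw1, (hco w hwp hwq) ▸ hw2⟩, hwq⟩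
      have hqmem : q ∈ {w | H.Adj v w ∧ c w = 4} := ⟨hadj, hcq⟩
      calc {w | H.Adj v w ∧ c' w = 4}.ncard
          ≤ ({w | H.Adj v w ∧ c w = 4} \ {q}).ncard :=
            Set.ncard_le_ncard hsub (Set.toFinite _)
        _ = {w | H.Adj v w ∧ c w = 4}.ncard - 1 := by
            rw [Set.ncard_diff (Set.singleton_subset_iff.2 hqmem) (Set.toFinite _),
              Set.ncard_singleton]
        _ ≤ 4 := by omega
    by_cases hv' : v = q
    · subst hv'
      rw [hcq']
      have hsub : {w | H.Adj v w ∧ c' w = 3} ⊆ {w | H.Adj v w ∧ c w = 3} \ {p} := by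
        intro w ⟨hw1, hw2⟩
        have hwp : w ≠ p := by intro h; subst h; rw [hcp'] at hw2; omega
        have hwq : w ≠ v := fun h => H.irrefl (h ▸ hw1)
        exact ⟨⟨hw1, (hco w hwp hwq) ▸ hw2⟩, hwp⟩
      have hpmem : p ∈ {w | H.Adj v w ∧ c w = 3} := ⟨hadj.symm, hcp⟩
      calc {w | H.Adj v w ∧ c' w = 3}.ncard
          ≤ ({w | H.Adj v w ∧ c w = 3} \ {p}).ncard :=
            Set.ncard_le_ncard hsub (Set.toFinite _)
        _ = {w | H.Adj v w ∧ c w = 3}.ncard - 1 := by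
            rw [Set.ncard_diff (Set.singleton_subset_iff.2 hpmem) (Set.toFinite _),
              Set.ncard_singleton]
        _ ≤ 3 := by omega
    · rw [hco v hv hv']
      rcases hc.1 v with hcv | hcv
      · -- c v = 3 : only q enters color 3
        rw [hcv]
        by_cases hadjq : H.Adj v q
        · have hlt := hsafe3 v hadjq.symm hv hcv
          have hsub : {w | H.Adj v w ∧ c' w = 3} ⊆
              insert q {w | H.Adj v w ∧ c w = 3} := by
            intro w ⟨hw1, hw2⟩
            by_cases hwq : w = q
            · exact Or.inl hwq
            by_cases hwp : w = p
            · subst hwp; rw [hcp'] at hw2; omega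
            · exact Or.inr ⟨hw1, (hco w hwp hwq) ▸ hw2⟩
          calc {w | H.Adj v w ∧ c' w = 3}.ncard
              ≤ (insert q {w | H.Adj v w ∧ c w = 3}).ncard :=
                Set.ncard_le_ncard hsub (Set.toFinite _)
            _ ≤ {w | H.Adj v w ∧ c w = 3}.ncard + 1 := Set.ncard_insert_le _ _
            _ ≤ 3 := by omega
        · have hsub : {w | H.Adj v w ∧ c' w = 3} ⊆ {w | H.Adj v w ∧ c w = 3} := by
            intro w ⟨hw1, hw2⟩
            have hwq : w ≠ q := fun h => hadjq (h ▸ hw1)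
            by_cases hwp : w = p
            · subst hwp; rw [hcp'] at hw2; omega
            · exact ⟨hw1, (hco w hwp hwq) ▸ hw2⟩
          have := hc.2 v
          rw [hcv] at this
          exact le_trans (Set.ncard_le_ncard hsub (Set.toFinite _)) this
      · -- c v = 4 : only p enters color 4
        rw [hcv]
        by_cases hadjp : H.Adj v p
        · have hlt := hsafe4 v hadjp.symm hv' hcv
          have hsub : {w | H.Adj v w ∧ c' w = 4} ⊆
              insert p {w | H.Adj v w ∧ c w = 4} := by
            intro w ⟨hw1, hw2⟩
            by_cases hwp : w = p
            · exact Or.inl hwp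
            by_cases hwq : w = q
            · subst hwq; rw [hcq'] at hw2; omega
            · exact Or.inr ⟨hw1, (hco w hwp hwq) ▸ hw2⟩
          calc {w | H.Adj v w ∧ c' w = 4}.ncard
              ≤ (insert p {w | H.Adj v w ∧ c w = 4}).ncard :=
                Set.ncard_le_ncard hsub (Set.toFinite _)
            _ ≤ {w | H.Adj v w ∧ c w = 4}.ncard + 1 := Set.ncard_insert_le _ _
            _ ≤ 4 := by omega
        · have hsub : {w | H.Adj v w ∧ c' w = 4} ⊆ {w | H.Adj v w ∧ c w = 4} := by
            intro w ⟨hw1, hw2⟩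
            have hwp : w ≠ p := fun h => hadjp (h ▸ hw1)
            by_cases hwq : w = q
            · subst hwq; rw [hcq'] at hw2; omega
            · exact ⟨hw1, (hco w hwp hwq) ▸ hw2⟩
          have := hc.2 v
          rw [hcv] at this
          exact le_trans (Set.ncard_le_ncard hsub (Set.toFinite _)) this

end Stmt11Aux

namespace Stmt11Aux

variable {V : Type*} [Fintype V]

lemma hadj_del (G : SimpleGraph V) (a b : V) (v w : V) :
    (G.deleteEdges {s(a,b)}).Adj v w ↔ G.Adj v w ∧ ¬(v = a ∧ w = b) ∧ ¬(v = b ∧ w = a) := by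
  simp only [SimpleGraph.deleteEdges_adj, Set.mem_singleton_iff, Sym2.eq_iff]
  tauto

lemma del_le {G : SimpleGraph V} {a b v w : V} (h : (G.deleteEdges {s(a,b)}).Adj v w) :
    G.Adj v w := ((hadj_del G a b v w).1 h).1

/-- If an `H = G - ab` coloring gives different colors to `a` and `b`, it colors `G`. -/
lemma transfer (G : SimpleGraph V) (a b : V) (hab : G.Adj a b) (c : V → ℕ)
    (hc : IsColoring34 (G.deleteEdges {s(a,b)}) c) (hne : c a ≠ c b) :
    IsColoring34 G c := by
  set H := G.deleteEdges {s(a,b)} with hH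
  refine ⟨hc.1, fun v => ?_⟩
  have hset : {w | G.Adj v w ∧ c w = c v} = {w | H.Adj v w ∧ c w = c v} := by
    ext w
    simp only [Set.mem_setOf_eq]
    constructor
    · rintro ⟨hw1, hw2⟩
      refine ⟨(hadj_del G a b v w).2 ⟨hw1, ?_, ?_⟩, hw2⟩
      · rintro ⟨rfl, rfl⟩; exact hne (hw2.symm)
      · rintro ⟨rfl, rfl⟩; exact hne hw2
    · rintro ⟨hw1, hw2⟩
      exact ⟨del_le hw1, hw2⟩
  rw [hset]
  exact hc.2 v

/-- Structure of any coloring of `G - ab` when `G` is not colorable. -/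
lemma failure (G : SimpleGraph V) (a b : V) (hab : G.Adj a b) (hnc : ¬ Colorable34 G)
    (c : V → ℕ) (hc : IsColoring34 (G.deleteEdges {s(a,b)}) c) :
    c a = c b ∧
      ({w | (G.deleteEdges {s(a,b)}).Adj a w ∧ c w = c a}.ncard = c a ∨
       {w | (G.deleteEdges {s(a,b)}).Adj b w ∧ c w = c b}.ncard = c b) := by
  set H := G.deleteEdges {s(a,b)} with hH
  have hanb : a ≠ b := hab.ne
  have hcab : c a = c b := by
    by_contra hne
    exact hnc ⟨c, transfer G a b hab c hc hne⟩
  refine ⟨hcab, ?_⟩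
  by_contra hcon
  push_neg at hcon
  obtain ⟨hna, hnb⟩ := hcon
  apply hnc
  refine ⟨c, hc.1, fun v => ?_⟩
  have hkey : ∀ x y : V, x = a ∧ y = b ∨ x = b ∧ y = a →
      {w | G.Adj x w ∧ c w = c x} = insert y {w | H.Adj x w ∧ c w = c x} := by
    rintro x y hxy
    have hxyadj : G.Adj x y := by rcases hxy with ⟨rfl, rfl⟩ | ⟨rfl, rfl⟩
                                  exacts [hab, hab.symm]
    have hcxy : c y = c x := by rcases hxy with ⟨rfl, rfl⟩ | ⟨rfl, rfl⟩
                                exacts [hcab.symm, hcab]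
    ext w
    simp only [Set.mem_setOf_eq, Set.mem_insert_iff]
    constructor
    · rintro ⟨hw1, hw2⟩
      by_cases hwy : w = y
      · exact Or.inl hwy
      · refine Or.inr ⟨(hadj_del G a b x w).2 ⟨hw1, ?_, ?_⟩, hw2⟩
        · rintro ⟨h1, h2⟩
          rcases hxy with ⟨h3, h4⟩ | ⟨h3, h4⟩
          · exact hwy (h2.trans h4.symm)
          · exact hanb (h1.symm.trans h3)
        · rintro ⟨h1, h2⟩
          rcases hxy with ⟨h3, h4⟩ | ⟨h3, h4⟩
          · exact hanb (h3.symm.trans h1)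
          · exact hwy (h2.trans h4.symm)
    · rintro (rfl | ⟨hw1, hw2⟩)
      · exact ⟨hxyadj, hcxy⟩
      · exact ⟨del_le hw1, hw2⟩
  by_cases hva : v = a
  · rw [hkey v b (Or.inl ⟨hva, rfl⟩)]
    have hbnm : b ∉ {w | H.Adj v w ∧ c w = c v} := by
      rintro ⟨hw1, -⟩
      rw [hadj_del G a b v b] at hw1
      exact hw1.2.1 ⟨hva, rfl⟩
    rw [Set.ncard_insert_of_notMem hbnm (Set.toFinite _)]
    have h1 := hc.2 v
    have h2 : {w | H.Adj v w ∧ c w = c v}.ncard ≠ c v := by rw [hva]; exact hna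
    omega
  by_cases hvb : v = b
  · rw [hkey v a (Or.inr ⟨hvb, rfl⟩)]
    have hanm : a ∉ {w | H.Adj v w ∧ c w = c v} := by
      rintro ⟨hw1, -⟩
      rw [hadj_del G a b v a] at hw1
      exact hw1.2.2 ⟨hvb, rfl⟩
    rw [Set.ncard_insert_of_notMem hanm (Set.toFinite _)]
    have h1 := hc.2 v
    have h2 : {w | H.Adj v w ∧ c w = c v}.ncard ≠ c v := by rw [hvb]; exact hnb
    omega
  · have hset : {w | G.Adj v w ∧ c w = c v} = {w | H.Adj v w ∧ c w = c v} := by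
      ext w
      simp only [Set.mem_setOf_eq]
      constructor
      · rintro ⟨hw1, hw2⟩
        refine ⟨(hadj_del G a b v w).2 ⟨hw1, ?_, ?_⟩, hw2⟩
        · rintro ⟨rfl, -⟩; exact hva rfl
        · rintro ⟨rfl, -⟩; exact hvb rfl
      · rintro ⟨hw1, hw2⟩
        exact ⟨del_le hw1, hw2⟩
    rw [hset]
    exact hc.2 v

/-- 3-count + 4-count = number of neighbours. -/
lemma partition (H : SimpleGraph V) (c : V → ℕ) (h34 : ∀ v, c v = 3 ∨ c v = 4) (v : V) :
    {w | H.Adj v w ∧ c w = 3}.ncard + {w | H.Adj v w ∧ c w = 4}.ncard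
      = {w | H.Adj v w}.ncard := by
  rw [← Set.ncard_union_eq ?_ (Set.toFinite _) (Set.toFinite _)]
  · congr 1
    ext w
    simp only [Set.mem_union, Set.mem_setOf_eq]
    constructor
    · rintro (⟨h, -⟩ | ⟨h, -⟩) <;> exact h
    · intro h
      rcases h34 w with h' | h'
      · exact Or.inl ⟨h, h'⟩
      · exact Or.inr ⟨h, h'⟩
  · rw [Set.disjoint_left]
    rintro w ⟨-, h3⟩ ⟨-, h4⟩
    omega

lemma cnt_le_deg (H : SimpleGraph V) (G : SimpleGraph V) (hle : ∀ x y, H.Adj x y → G.Adj x y)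
    (c : V → ℕ) (i : ℕ) (v : V) : {w | H.Adj v w ∧ c w = i}.ncard ≤ degN G v := by
  apply Set.ncard_le_ncard _ (Set.toFinite _)
  rintro w ⟨hw, -⟩
  exact hle v w hw

end Stmt11Aux

namespace Stmt11Aux

variable {V : Type*} [Fintype V]

/-- The key configuration: a 5p-vertex `p` whose unique 3⁺-neighbour `x`
is a 5s- or 6p-vertex adjacent to it. -/
lemma ML1 (G : SimpleGraph V) (hnc : ¬ Colorable34 G)
    (hmin : ∀ e ∈ G.edgeSet, Colorable34 (G.deleteEdges {e}))
    (p x : V) (hpx : G.Adj p x) (hdp : degN G p = 5)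
    (hsmall : ∀ w, G.Adj p w → w ≠ x → degN G w ≤ 2)
    (hx : degN G x = 5 ∨ (degN G x = 6 ∧ ∀ w, G.Adj x w → w ≠ p → degN G w ≤ 2)) :
    False := by
  classical
  set H := G.deleteEdges {s(p,x)} with hH
  obtain ⟨c, hc⟩ := hmin s(p,x) ((SimpleGraph.mem_edgeSet G).2 hpx)
  rw [← hH] at hc
  have hnpx : p ≠ x := hpx.ne
  have hfail := failure G p x hpx hnc c (hH ▸ hc)
  have hle : ∀ a b : V, H.Adj a b → G.Adj a b := fun a b h => del_le (hH ▸ h)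
  -- neighbours of p in H
  have hNHp : {w | H.Adj p w} = {w | G.Adj p w} \ {x} := by
    ext w
    simp only [Set.mem_setOf_eq, Set.mem_diff, Set.mem_singleton_iff]
    rw [hH, hadj_del]
    constructor
    · rintro ⟨h1, h2, -⟩
      exact ⟨h1, fun hwx => h2 ⟨rfl, hwx⟩⟩
    · rintro ⟨h1, h2⟩
      exact ⟨h1, fun hh => h2 hh.2, fun hh => hnpx hh.1⟩
  have hNHpc : {w | H.Adj p w}.ncard = 4 := by
    have hsub : ({x} : Set V) ⊆ {w | G.Adj p w} := by
      rintro y rfl; exact hpx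
    rw [hNHp, Set.ncard_diff hsub (Set.toFinite _), Set.ncard_singleton]
    have : {w | G.Adj p w}.ncard = 5 := hdp
    omega
  -- any H-neighbour of p is small, hence never saturated
  have hsafeP : ∀ (j : ℕ) (w : V), H.Adj p w → {z | H.Adj w z ∧ c z = j}.ncard ≤ 2 := by
    intro j w hw
    have hwx : w ≠ x := by
      rw [hH, hadj_del] at hw
      exact fun hwx => hw.2.1 ⟨rfl, hwx⟩
    have hdeg := hsmall w (hle p w hw) hwx
    calc {z | H.Adj w z ∧ c z = j}.ncard ≤ degN G w := cnt_le_deg H G hle c j w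
      _ ≤ 2 := hdeg
  -- step 1 : c p = 4
  have hcp4 : c p = 4 := by
    rcases hc.1 p with hcp3 | hcp4
    · exfalso
      have hflip := flip1 H c hc p 4 (Or.inr rfl)
        (by
          apply le_trans (Set.ncard_le_ncard _ (Set.toFinite _)) hNHpc.le
          rintro w ⟨h1, -⟩; exact h1)
        (fun w hw _ => lt_of_le_of_lt (hsafeP 4 w hw) (by norm_num))
      apply hnc
      refine ⟨_, transfer G p x hpx _ (hH ▸ hflip) ?_⟩
      rw [Function.update_self, Function.update_of_ne hnpx.symm, ← hfail.1, hcp3]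
      omega
    · exact hcp4
  have hcx4 : c x = 4 := by rw [← hfail.1]; exact hcp4
  -- step 2 : all H-neighbours of p are coloured 3
  have hall3 : ∀ w, H.Adj p w → c w = 3 := by
    by_contra hcon
    push_neg at hcon
    obtain ⟨w0, hw0adj, hw0ne⟩ := hcon
    have hw0mem : w0 ∈ {w | H.Adj p w} := hw0adj
    have h3le : {w | H.Adj p w ∧ c w = 3}.ncard ≤ 3 := by
      have hsub : {w | H.Adj p w ∧ c w = 3} ⊆ {w | H.Adj p w} \ {w0} := by
        rintro w ⟨h1, h2⟩
        exact ⟨h1, fun hww => hw0ne (by rw [← hww]; exact h2)⟩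
      calc {w | H.Adj p w ∧ c w = 3}.ncard
          ≤ ({w | H.Adj p w} \ {w0}).ncard := Set.ncard_le_ncard hsub (Set.toFinite _)
        _ = 3 := by
            rw [Set.ncard_diff (Set.singleton_subset_iff.2 hw0mem) (Set.toFinite _),
              Set.ncard_singleton, hNHpc]
    have hflip := flip1 H c hc p 3 (Or.inl rfl) h3le
      (fun w hw _ => lt_of_le_of_lt (hsafeP 3 w hw) (by norm_num))
    apply hnc
    refine ⟨_, transfer G p x hpx _ (hH ▸ hflip) ?_⟩
    rw [Function.update_self, Function.update_of_ne hnpx.symm, hcx4]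
    omega
  -- step 3 : x is 4-saturated in H
  have h4p0 : {w | H.Adj p w ∧ c w = 4}.ncard = 0 := by
    have : {w | H.Adj p w ∧ c w = 4} = ∅ := by
      ext w
      simp only [Set.mem_setOf_eq, Set.mem_empty_iff_false, iff_false, not_and]
      intro h1 h2
      rw [hall3 w h1] at h2
      omega
    rw [this, Set.ncard_empty]
  have hx4sat : {w | H.Adj x w ∧ c w = 4}.ncard = 4 := by
    rcases hfail.2 with hfa | hfb
    · exfalso
      rw [hcp4] at hfa
      rw [← hH] at hfa
      omega
    · rw [hcx4] at hfb
      rw [← hH] at hfb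
      exact hfb
  -- neighbours of x in H
  have hNHx : {w | H.Adj x w} = {w | G.Adj x w} \ {p} := by
    ext w
    simp only [Set.mem_setOf_eq, Set.mem_diff, Set.mem_singleton_iff]
    rw [hH, hadj_del]
    constructor
    · rintro ⟨h1, -, h2⟩
      exact ⟨h1, fun hwp => h2 ⟨rfl, hwp⟩⟩
    · rintro ⟨h1, h2⟩
      exact ⟨h1, fun hh => hnpx hh.1.symm, fun hh => h2 hh.2⟩
  have hNHxc : {w | H.Adj x w}.ncard = degN G x - 1 := by
    have hsub : ({p} : Set V) ⊆ {w | G.Adj x w} := by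
      rintro y rfl; exact hpx.symm
    rw [hNHx, Set.ncard_diff hsub (Set.toFinite _), Set.ncard_singleton]
    rfl
  have hpart := partition H c hc.1 x
  have hdegx : degN G x = 5 ∨ degN G x = 6 := by
    rcases hx with h | h
    exacts [Or.inl h, Or.inr h.1]
  have h3x : {w | H.Adj x w ∧ c w = 3}.ncard = degN G x - 5 := by omega
  -- step 4 : flip x to 3
  have hflip := flip1 H c hc x 3 (Or.inl rfl)
    (by rw [h3x]; omega)
    (by
      intro w hw hcw
      rcases hx with hx5 | ⟨hx6, hxs⟩
      · exfalso
        have : {w | H.Adj x w ∧ c w = 3} = ∅ := by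
          apply Set.ncard_eq_zero (Set.toFinite _) |>.1
          omega
        have hwmem : w ∈ {w | H.Adj x w ∧ c w = 3} := ⟨hw, hcw⟩
        rw [this] at hwmem
        exact hwmem
      · have hwp : w ≠ p := by
          rw [hH, hadj_del] at hw
          exact fun hwp => hw.2.2 ⟨rfl, hwp⟩
        have hdeg := hxs w (hle x w hw) hwp
        calc {z | H.Adj w z ∧ c z = 3}.ncard ≤ degN G w := cnt_le_deg H G hle c 3 w
          _ < 3 := by omega)
  apply hnc
  refine ⟨_, transfer G p x hpx _ (hH ▸ hflip) ?_⟩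
  rw [Function.update_of_ne hnpx, Function.update_self, hcp4]
  omega

end Stmt11Aux

namespace Stmt11Aux

variable {V : Type*} [Fintype V]

/-- The hard configuration: `v1, v3` of degree 2, `v2` the 5p-vertex between them
with off-cycle 3⁺-neighbour, `v4, v5, v6` semi-poor/poor. -/
lemma caseB (G : SimpleGraph V) (hnc : ¬ Colorable34 G)
    (hmin : ∀ e ∈ G.edgeSet, Colorable34 (G.deleteEdges {e}))
    (v1 v2 v3 v4 v5 v6 : V)
    (hnd : ([v1, v2, v3, v4, v5, v6] : List V).Nodup)
    (a12 : G.Adj v1 v2) (a23 : G.Adj v2 v3) (a34 : G.Adj v3 v4)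
    (a45 : G.Adj v4 v5) (a56 : G.Adj v5 v6) (a61 : G.Adj v6 v1)
    (n46 : ¬ G.Adj v4 v6)
    (d1 : degN G v1 = 2) (d3 : degN G v3 = 2) (d2 : degN G v2 = 5)
    (h5 : degN G v5 = 5)
    (h5nb : ∀ w, G.Adj v5 w → w ≠ v4 → w ≠ v6 → degN G w ≤ 2)
    (h4 : degN G v4 = 5 ∨ (degN G v4 = 6 ∧ ∀ w, G.Adj v4 w → w ≠ v5 → degN G w ≤ 2))
    (h6 : degN G v6 = 5 ∨ (degN G v6 = 6 ∧ ∀ w, G.Adj v6 w → w ≠ v5 → degN G w ≤ 2)) :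
    False := by
  classical
  simp only [List.nodup_cons, List.mem_cons, List.mem_singleton, List.not_mem_nil,
    or_false, not_or, List.nodup_nil, and_true, List.mem_nil_iff] at hnd
  obtain ⟨⟨e12, e13, e14, e15, e16⟩, ⟨e23, e24, e25, e26⟩, ⟨e34, e35, e36⟩, ⟨e45, e46⟩, e56, -⟩ := hnd
  set H := G.deleteEdges {s(v1,v2)} with hH
  obtain ⟨c, hc⟩ := hmin s(v1,v2) ((SimpleGraph.mem_edgeSet G).2 a12)
  rw [← hH] at hc
  have hfail := failure G v1 v2 a12 hnc c (hH ▸ hc)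
  have hle : ∀ a b : V, H.Adj a b → G.Adj a b := fun a b h => del_le (hH ▸ h)
  have hHG : ∀ a b : V, a ≠ v1 → a ≠ v2 → (H.Adj a b ↔ G.Adj a b) := by
    intro a b ha1 ha2
    rw [hH, hadj_del]
    constructor
    · exact fun h => h.1
    · intro h
      exact ⟨h, fun hh => ha1 hh.1, fun hh => ha2 hh.1⟩
  have hHv2 : ∀ b : V, b ≠ v1 → (H.Adj v2 b ↔ G.Adj v2 b) := by
    intro b hb
    rw [hH, hadj_del]
    constructor
    · exact fun h => h.1
    · intro h
      exact ⟨h, fun hh => e12 hh.1.symm, fun hh => hb hh.2⟩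
  have hHv1 : ∀ b : V, b ≠ v2 → (H.Adj v1 b ↔ G.Adj v1 b) := by
    intro b hb
    rw [hH, hadj_del]
    constructor
    · exact fun h => h.1
    · intro h
      exact ⟨h, fun hh => hb hh.2, fun hh => e12 hh.1⟩
  -- the neighbourhood of v1
  have hNv1 : {w | G.Adj v1 w} = {v2, v6} := by
    symm
    apply Set.eq_of_subset_of_ncard_le
    · rintro w (rfl | rfl)
      exacts [a12, a61.symm]
    · rw [Set.ncard_pair e26]
      exact le_of_eq d1
    · exact Set.toFinite _
  have hNHv1 : {w | H.Adj v1 w} = {v6} := by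
    ext w
    simp only [Set.mem_setOf_eq, Set.mem_singleton_iff]
    constructor
    · intro h
      have hw2 : ¬(w = v2) := by
        rw [hH, hadj_del] at h
        exact fun hh => h.2.1 ⟨rfl, hh⟩
      have := hle v1 w h
      have hmem : w ∈ ({v2, v6} : Set V) := by rw [← hNv1]; exact this
      rcases hmem with h' | h'
      · exact absurd h' hw2
      · exact h'
    · intro h
      rw [h]
      exact (hHv1 v6 (fun hh => e26 hh.symm)).2 a61.symm
  have hsafe1 : ∀ j : ℕ, {z | H.Adj v1 z ∧ c z = j}.ncard ≤ 1 := by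
    intro j
    have hsub : {z | H.Adj v1 z ∧ c z = j} ⊆ {v6} := by
      rintro z ⟨hz, -⟩
      rw [← hNHv1]; exact hz
    calc {z | H.Adj v1 z ∧ c z = j}.ncard ≤ ({v6} : Set V).ncard :=
        Set.ncard_le_ncard hsub (Set.toFinite _)
      _ = 1 := Set.ncard_singleton _
  -- the H-neighbourhood of v2
  have hNHv2 : {w | H.Adj v2 w} = {w | G.Adj v2 w} \ {v1} := by
    ext w
    simp only [Set.mem_setOf_eq, Set.mem_diff, Set.mem_singleton_iff]
    rw [hH, hadj_del]
    constructor
    · rintro ⟨h1, -, h2⟩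
      exact ⟨h1, fun hw => h2 ⟨rfl, hw⟩⟩
    · rintro ⟨h1, h2⟩
      exact ⟨h1, fun hh => e12 hh.1.symm, fun hh => h2 hh.2⟩
  have hNHv2c : {w | H.Adj v2 w}.ncard = 4 := by
    have hsub : ({v1} : Set V) ⊆ {w | G.Adj v2 w} := by
      rintro y rfl; exact a12.symm
    rw [hNHv2, Set.ncard_diff hsub (Set.toFinite _), Set.ncard_singleton]
    have : {w | G.Adj v2 w}.ncard = 5 := d2
    omega
  -- the failure must be at v2
  have hsat2 : {w | H.Adj v2 w ∧ c w = c v2}.ncard = c v2 := by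
    rcases hfail.2 with hfa | hfb
    · exfalso
      rw [← hH] at hfa
      have h1 := hsafe1 (c v1)
      have h2 : {w | H.Adj v1 w ∧ c w = c v1}.ncard = c v1 := hfa
      rcases hc.1 v1 with h3 | h3 <;> omega
    · rw [← hH] at hfb
      exact hfb
  -- c v2 = 3
  have hc2 : c v2 = 3 := by
    by_contra hne
    have hc24 : c v2 = 4 := (hc.1 v2).resolve_left hne
    rw [hc24] at hsat2
    -- all H-neighbours of v2 are coloured 4
    have hall : {w | H.Adj v2 w ∧ c w = 4} = {w | H.Adj v2 w} := by
      apply Set.eq_of_subset_of_ncard_le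
      · rintro w ⟨h, -⟩; exact h
      · rw [hNHv2c, hsat2]
      · exact Set.toFinite _
    have hflip := flip1 H c hc v2 3 (Or.inl rfl)
      (by
        have hempty : {w | H.Adj v2 w ∧ c w = 3} = ∅ := by
          ext w
          simp only [Set.mem_setOf_eq, Set.mem_empty_iff_false, iff_false, not_and]
          intro h1 h2
          have : w ∈ {w | H.Adj v2 w ∧ c w = 4} := by rw [hall]; exact h1
          have := this.2
          omega
        rw [hempty, Set.ncard_empty]
        omega)
      (by
        intro w hw hcw
        exfalso
        have : w ∈ {w | H.Adj v2 w ∧ c w = 4} := by rw [hall]; exact hw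
        have := this.2
        omega)
    apply hnc
    refine ⟨_, transfer G v1 v2 a12 _ (hH ▸ hflip) ?_⟩
    rw [Function.update_of_ne e12, Function.update_self, hfail.1, hc24]
    omega
  have hc1 : c v1 = 3 := by rw [hfail.1, hc2]
  rw [hc2] at hsat2
  -- the unique 4-coloured H-neighbour z of v2
  have hpart2 := partition H c hc.1 v2
  have h4v2c : {w | H.Adj v2 w ∧ c w = 4}.ncard = 1 := by omega
  obtain ⟨z, hz⟩ := Set.ncard_eq_one.1 h4v2c
  have hzmem : H.Adj v2 z ∧ c z = 4 := by
    have : z ∈ {w | H.Adj v2 w ∧ c w = 4} := by rw [hz]; exact rfl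
    exact this
  -- v2 cannot be flipped to 4 : some 4-neighbour is saturated, it must be z
  have hzsat : {w | H.Adj z w ∧ c w = 4}.ncard = 4 := by
    by_contra hcon
    have hflip := flip1 H c hc v2 4 (Or.inr rfl)
      (by rw [h4v2c]; omega)
      (by
        intro w hw hcw
        have hwz : w = z := by
          have : w ∈ {w | H.Adj v2 w ∧ c w = 4} := ⟨hw, hcw⟩
          rw [hz] at this
          exact this
        subst hwz
        have hle4 : {z' | H.Adj w z' ∧ c z' = 4}.ncard ≤ 4 := by
          have := hc.2 w
          rw [hcw] at this
          exact this
        omega)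
    apply hnc
    refine ⟨_, transfer G v1 v2 a12 _ (hH ▸ hflip) ?_⟩
    rw [Function.update_of_ne e12, Function.update_self, hc1]
    omega
  have hzdeg : 4 ≤ degN G z := by
    have := cnt_le_deg H G hle c 4 z
    omega
  -- hence v3 is coloured 3
  have hc3 : c v3 = 3 := by
    rcases hc.1 v3 with h | h
    · exact h
    · exfalso
      have hmem : v3 ∈ {w | H.Adj v2 w ∧ c w = 4} :=
        ⟨(hHv2 v3 (fun hh => e13 hh.symm)).2 a23, h⟩
      rw [hz] at hmem
      have hv3z : v3 = z := hmem
      rw [← hv3z] at hzdeg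
      omega
  -- basic H-adjacencies on the cycle
  have hH61 : H.Adj v6 v1 := (hHG v6 v1 (fun h => e16 h.symm) (fun h => e26 h.symm)).2 a61
  have hH56 : H.Adj v5 v6 := (hHG v5 v6 (fun h => e15 h.symm) (fun h => e25 h.symm)).2 a56
  have hH45 : H.Adj v4 v5 := (hHG v4 v5 (fun h => e14 h.symm) (fun h => e24 h.symm)).2 a45
  have hH43 : H.Adj v4 v3 := (hHG v4 v3 (fun h => e14 h.symm) (fun h => e24 h.symm)).2 a34.symm
  have hH46 : ¬ H.Adj v4 v6 := fun h => n46 (hle _ _ h)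
  -- v6 is 4-saturated (otherwise flip v1 to 4)
  have hv6sat : c v6 = 4 ∧ {w | H.Adj v6 w ∧ c w = 4}.ncard = 4 := by
    by_contra hcon
    have hflip := flip1 H c hc v1 4 (Or.inr rfl)
      (le_trans (hsafe1 4) (by norm_num))
      (by
        intro w hw hcw
        have hwv6 : w = v6 := by
          have : w ∈ ({v6} : Set V) := by rw [← hNHv1]; exact hw
          exact this
        subst hwv6
        have hle4 : {z' | H.Adj w z' ∧ c z' = 4}.ncard ≤ 4 := by
          have := hc.2 w
          rw [hcw] at this
          exact this
        have hne4 : {z' | H.Adj w z' ∧ c z' = 4}.ncard ≠ 4 := fun h => hcon ⟨hcw, h⟩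
        omega)
    apply hnc
    refine ⟨_, transfer G v1 v2 a12 _ (hH ▸ hflip) ?_⟩
    rw [Function.update_self, Function.update_of_ne (fun h => e12 h.symm), hc2]
    omega
  obtain ⟨hc6, h6sat⟩ := hv6sat
  -- the finisher : any H-colouring giving v6, v1, v2 colour 3 yields a contradiction
  have finisher : ∀ c1 : V → ℕ, IsColoring34 H c1 → c1 v6 = 3 → c1 v1 = 3 → c1 v2 = 3 →
      False := by
    intro c1 hc1 h6' h1' h2'
    have hflip := flip1 H c1 hc1 v1 4 (Or.inr rfl)
      (by
        have hsub : {w | H.Adj v1 w ∧ c1 w = 4} ⊆ {v6} := by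
          rintro w ⟨hw, -⟩
          rw [← hNHv1]; exact hw
        calc {w | H.Adj v1 w ∧ c1 w = 4}.ncard ≤ ({v6} : Set V).ncard :=
            Set.ncard_le_ncard hsub (Set.toFinite _)
          _ ≤ 4 := by rw [Set.ncard_singleton]; omega)
      (by
        intro w hw hcw
        exfalso
        have hwv6 : w = v6 := by
          have : w ∈ ({v6} : Set V) := by rw [← hNHv1]; exact hw
          exact this
        rw [hwv6, h6'] at hcw
        omega)
    apply hnc
    refine ⟨_, transfer G v1 v2 a12 _ (hH ▸ hflip) ?_⟩
    rw [Function.update_self, Function.update_of_ne (fun h => e12 h.symm), h2']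
    omega
  -- partition at v6
  have hNHv6 : {w | H.Adj v6 w} = {w | G.Adj v6 w} := by
    ext w
    exact hHG v6 w (fun h => e16 h.symm) (fun h => e26 h.symm)
  have hdeg6 : degN G v6 = 5 ∨ degN G v6 = 6 := by
    rcases h6 with h | h
    exacts [Or.inl h, Or.inr h.1]
  have hpart6 := partition H c hc.1 v6
  have hNHv6c : {w | H.Adj v6 w}.ncard = degN G v6 := by rw [hNHv6]; rfl
  have h3v6c : {w | H.Adj v6 w ∧ c w = 3}.ncard = degN G v6 - 4 := by omega
  have hv1m6 : v1 ∈ {w | H.Adj v6 w ∧ c w = 3} := ⟨hH61, hc1⟩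
  rcases h6 with h6d | ⟨h6d, hsm6⟩
  · -- deg v6 = 5 : flip v6 to 3 and finish
    have h1c : {w | H.Adj v6 w ∧ c w = 3}.ncard = 1 := by rw [h3v6c, h6d]
    have h3eq : {w | H.Adj v6 w ∧ c w = 3} = {v1} :=
      (Set.eq_of_subset_of_ncard_le (Set.singleton_subset_iff.2 hv1m6)
        ((h1c.trans (Set.ncard_singleton v1).symm).le) (Set.toFinite _)).symm
    have hflip := flip1 H c hc v6 3 (Or.inl rfl)
      (by rw [h3v6c, h6d]; omega)
      (by
        intro w hw hcw
        have hwv1 : w = v1 := by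
          have : w ∈ ({v1} : Set V) := by rw [← h3eq]; exact ⟨hw, hcw⟩
          exact this
        subst hwv1
        exact lt_of_le_of_lt (hsafe1 3) (by norm_num))
    exact finisher _ hflip (Function.update_self _ _ _)
      (by rw [Function.update_of_ne e16]; exact hc1)
      (by rw [Function.update_of_ne e26]; exact hc2)
  · -- deg v6 = 6
    have h3c2 : {w | H.Adj v6 w ∧ c w = 3}.ncard = 2 := by rw [h3v6c, h6d]
    have hdiffc : ({w | H.Adj v6 w ∧ c w = 3} \ {v1}).ncard = 1 := by
      rw [Set.ncard_diff (Set.singleton_subset_iff.2 hv1m6) (Set.toFinite _),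
        Set.ncard_singleton, h3c2]
    obtain ⟨w6, hw6eq⟩ := Set.ncard_eq_one.1 hdiffc
    have hw6mem : w6 ∈ {w | H.Adj v6 w ∧ c w = 3} \ {v1} := by rw [hw6eq]; exact rfl
    obtain ⟨⟨hw6adj, hw6c⟩, hw6ne1⟩ := hw6mem
    have h3set6 : {w | H.Adj v6 w ∧ c w = 3} = {v1, w6} := by
      ext w
      simp only [Set.mem_setOf_eq, Set.mem_insert_iff, Set.mem_singleton_iff]
      constructor
      · intro hm
        by_cases hwv1 : w = v1
        · exact Or.inl hwv1
        · right
          have : w ∈ {w | H.Adj v6 w ∧ c w = 3} \ {v1} := ⟨hm, hwv1⟩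
          rw [hw6eq] at this
          exact this
      · rintro (rfl | rfl)
        exacts [⟨hH61, hc1⟩, ⟨hw6adj, hw6c⟩]
    -- w6 must be v5, 3-saturated
    have hkey : w6 = v5 ∧ {w | H.Adj v5 w ∧ c w = 3}.ncard = 3 := by
      by_contra hcon
      have hflip := flip1 H c hc v6 3 (Or.inl rfl)
        (by rw [h3c2]; omega)
        (by
          intro w hw hcw
          have hmem : w ∈ ({v1, w6} : Set V) := by rw [← h3set6]; exact ⟨hw, hcw⟩
          rcases hmem with rfl | rfl
          · exact lt_of_le_of_lt (hsafe1 3) (by norm_num)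
          · by_cases hwv5 : w = v5
            · have hne3 : {z | H.Adj w z ∧ c z = 3}.ncard ≠ 3 := by
                intro h
                exact hcon ⟨hwv5, by rw [← hwv5]; exact h⟩
              have hle3 : {z | H.Adj w z ∧ c z = 3}.ncard ≤ 3 := by
                have := hc.2 w
                rw [hcw] at this
                exact this
              omega
            · have hdle := hsm6 w (hle v6 w hw) hwv5
              have := cnt_le_deg H G hle c 3 w
              omega)
      exact finisher _ hflip (Function.update_self _ _ _)
        (by rw [Function.update_of_ne e16]; exact hc1)
        (by rw [Function.update_of_ne e26]; exact hc2)
    obtain ⟨hw6v5, h5sat⟩ := hkey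
    rw [hw6v5] at h3set6 hw6adj hw6c
    have hc5 : c v5 = 3 := hw6c
    -- partition at v5
    have hNHv5 : {w | H.Adj v5 w} = {w | G.Adj v5 w} := by
      ext w
      exact hHG v5 w (fun h => e15 h.symm) (fun h => e25 h.symm)
    have hpart5 := partition H c hc.1 v5
    have hNHv5c : {w | H.Adj v5 w}.ncard = 5 := by rw [hNHv5]; exact h5
    have h4v5c : {w | H.Adj v5 w ∧ c w = 4}.ncard = 2 := by omega
    have hv6m5 : v6 ∈ {w | H.Adj v5 w ∧ c w = 4} := ⟨hH56, hc6⟩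
    have hdiffc5 : ({w | H.Adj v5 w ∧ c w = 4} \ {v6}).ncard = 1 := by
      rw [Set.ncard_diff (Set.singleton_subset_iff.2 hv6m5) (Set.toFinite _),
        Set.ncard_singleton, h4v5c]
    obtain ⟨z5, hz5eq⟩ := Set.ncard_eq_one.1 hdiffc5
    have hz5mem : z5 ∈ {w | H.Adj v5 w ∧ c w = 4} \ {v6} := by rw [hz5eq]; exact rfl
    obtain ⟨⟨hz5adj, hz5c⟩, hz5ne6⟩ := hz5mem
    have h4set5 : {w | H.Adj v5 w ∧ c w = 4} = {v6, z5} := by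
      ext w
      simp only [Set.mem_setOf_eq, Set.mem_insert_iff, Set.mem_singleton_iff]
      constructor
      · intro hm
        by_cases hwv6 : w = v6
        · exact Or.inl hwv6
        · right
          have : w ∈ {w | H.Adj v5 w ∧ c w = 4} \ {v6} := ⟨hm, hwv6⟩
          rw [hz5eq] at this
          exact this
      · rintro (rfl | rfl)
        exacts [⟨hH56, hc6⟩, ⟨hz5adj, hz5c⟩]
    -- z5 must be v4, 4-saturated (otherwise swap v5/v6 and finish)
    have hkey2 : z5 = v4 ∧ {w | H.Adj v4 w ∧ c w = 4}.ncard = 4 := by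
      by_contra hcon
      have hswap := flip2 H c hc v5 v6 hH56 hc5 hc6
        (by rw [h4v5c]; omega)
        (by rw [h3c2]; omega)
        (by
          intro w hw hwne6 hcw
          have hmem : w ∈ ({v6, z5} : Set V) := by rw [← h4set5]; exact ⟨hw, hcw⟩
          rcases hmem with rfl | rfl
          · exact absurd rfl hwne6
          · by_cases hz4 : w = v4
            · have hne4 : {z | H.Adj w z ∧ c z = 4}.ncard ≠ 4 := by
                intro h
                apply hcon
                refine ⟨hz4, ?_⟩
                rw [← hz4]
                exact h
              have hle4 : {z | H.Adj w z ∧ c z = 4}.ncard ≤ 4 := by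
                have := hc.2 w
                rw [hcw] at this
                exact this
              omega
            · have hdle := h5nb w (hle v5 w hw) hz4 hwne6
              have := cnt_le_deg H G hle c 4 w
              omega)
        (by
          intro w hw hwne5 hcw
          have hmem : w ∈ ({v1, v5} : Set V) := by rw [← h3set6]; exact ⟨hw, hcw⟩
          rcases hmem with rfl | rfl
          · exact lt_of_le_of_lt (hsafe1 3) (by norm_num)
          · exact absurd rfl hwne5)
      refine finisher _ hswap (Function.update_self _ _ _) ?_ ?_
      · rw [Function.update_of_ne e16, Function.update_of_ne e15]
        exact hc1
      · rw [Function.update_of_ne e26, Function.update_of_ne e25]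
        exact hc2
    obtain ⟨hz5v4, h4sat4⟩ := hkey2
    rw [hz5v4] at h4set5 hz5adj hz5c
    have hc4 : c v4 = 4 := hz5c
    rcases h4 with h4d | ⟨h4d, hsm4⟩
    · -- deg v4 = 5 : counting contradiction
      have hsub : {w | H.Adj v4 w ∧ c w = 4} ⊆ {w | G.Adj v4 w} \ {v3, v5} := by
        rintro w ⟨hw, hcw⟩
        refine ⟨hle v4 w hw, ?_⟩
        simp only [Set.mem_insert_iff, Set.mem_singleton_iff, not_or]
        constructor
        · intro h; rw [h, hc3] at hcw; omega
        · intro h; rw [h, hc5] at hcw; omega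
      have hpairsub : ({v3, v5} : Set V) ⊆ {w | G.Adj v4 w} := by
        rintro w (rfl | rfl)
        exacts [a34.symm, a45]
      have hdiff : ({w | G.Adj v4 w} \ {v3, v5}).ncard = 3 := by
        rw [Set.ncard_diff hpairsub (Set.toFinite _), Set.ncard_pair e35]
        have : {w | G.Adj v4 w}.ncard = 5 := h4d
        omega
      have := Set.ncard_le_ncard hsub (Set.toFinite _)
      omega
    · -- deg v4 = 6 : triple flip then finish
      have hNHv4 : {w | H.Adj v4 w} = {w | G.Adj v4 w} := by
        ext w
        exact hHG v4 w (fun h => e14 h.symm) (fun h => e24 h.symm)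
      have hpart4 := partition H c hc.1 v4
      have hNHv4c : {w | H.Adj v4 w}.ncard = 6 := by rw [hNHv4]; exact h4d
      have h3v4c : {w | H.Adj v4 w ∧ c w = 3}.ncard = 2 := by omega
      have hpsub : ({v3, v5} : Set V) ⊆ {w | H.Adj v4 w ∧ c w = 3} := by
        rintro w (rfl | rfl)
        exacts [⟨hH43, hc3⟩, ⟨hH45, hc5⟩]
      have h3set4 : {w | H.Adj v4 w ∧ c w = 3} = {v3, v5} :=
        (Set.eq_of_subset_of_ncard_le hpsub
          ((h3v4c.trans (Set.ncard_pair e35).symm).le) (Set.toFinite _)).symm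
      set c1 := Function.update (Function.update (Function.update c v4 3) v6 3) v5 4
        with hc1def
      have hc1v4 : c1 v4 = 3 := by
        rw [hc1def, Function.update_of_ne e45, Function.update_of_ne e46,
          Function.update_self]
      have hc1v6 : c1 v6 = 3 := by
        rw [hc1def, Function.update_of_ne (fun h => e56 h.symm), Function.update_self]
      have hc1v5 : c1 v5 = 4 := by rw [hc1def, Function.update_self]
      have hc1o : ∀ w, w ≠ v4 → w ≠ v5 → w ≠ v6 → c1 w = c w := by
        intro w h4' h5' h6'
        rw [hc1def, Function.update_of_ne h5', Function.update_of_ne h6',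
          Function.update_of_ne h4']
      have hcol1 : IsColoring34 H c1 := by
        constructor
        · intro v
          by_cases hv4 : v = v4
          · rw [hv4, hc1v4]; left; rfl
          by_cases hv5 : v = v5
          · rw [hv5, hc1v5]; right; rfl
          by_cases hv6 : v = v6
          · rw [hv6, hc1v6]; left; rfl
          · rw [hc1o v hv4 hv5 hv6]; exact hc.1 v
        · intro v
          by_cases hv5 : v = v5
          · subst hv5
            rw [hc1v5]
            have hempty : {w | H.Adj v w ∧ c1 w = 4} = ∅ := by
              ext w
              simp only [Set.mem_setOf_eq, Set.mem_empty_iff_false, iff_false, not_and]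
              intro hw hcw
              by_cases hw4 : w = v4
              · rw [hw4, hc1v4] at hcw; omega
              by_cases hw6 : w = v6
              · rw [hw6, hc1v6] at hcw; omega
              by_cases hw5 : w = v
              · exact H.irrefl (hw5 ▸ hw)
              · rw [hc1o w hw4 hw5 hw6] at hcw
                have : w ∈ ({v6, v4} : Set V) := by rw [← h4set5]; exact ⟨hw, hcw⟩
                rcases this with rfl | rfl
                exacts [hw6 rfl, hw4 rfl]
            rw [hempty, Set.ncard_empty]
            omega
          by_cases hv4 : v = v4
          · subst hv4
            rw [hc1v4]
            have hsub : {w | H.Adj v w ∧ c1 w = 3} ⊆ {v3} := by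
              rintro w ⟨hw, hcw⟩
              by_cases hw5 : w = v5
              · rw [hw5, hc1v5] at hcw; omega
              by_cases hw6 : w = v6
              · exact absurd (hw6 ▸ hw) hH46
              by_cases hw4 : w = v
              · exact absurd (hw4 ▸ hw) (H.irrefl)
              · rw [hc1o w hw4 hw5 hw6] at hcw
                have : w ∈ ({v3, v5} : Set V) := by rw [← h3set4]; exact ⟨hw, hcw⟩
                rcases this with rfl | rfl
                exacts [rfl, absurd rfl hw5]
            calc {w | H.Adj v w ∧ c1 w = 3}.ncard ≤ ({v3} : Set V).ncard :=
                Set.ncard_le_ncard hsub (Set.toFinite _)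
              _ ≤ 3 := by rw [Set.ncard_singleton]; omega
          by_cases hv6 : v = v6
          · subst hv6
            rw [hc1v6]
            have hsub : {w | H.Adj v w ∧ c1 w = 3} ⊆ {v1} := by
              rintro w ⟨hw, hcw⟩
              by_cases hw5 : w = v5
              · rw [hw5, hc1v5] at hcw; omega
              by_cases hw4 : w = v4
              · exact absurd (hw4 ▸ hw).symm hH46
              by_cases hw6 : w = v
              · exact absurd (hw6 ▸ hw) (H.irrefl)
              · rw [hc1o w hw4 hw5 hw6] at hcw
                have : w ∈ ({v1, v5} : Set V) := by rw [← h3set6]; exact ⟨hw, hcw⟩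
                rcases this with rfl | rfl
                exacts [rfl, absurd rfl hw5]
            calc {w | H.Adj v w ∧ c1 w = 3}.ncard ≤ ({v1} : Set V).ncard :=
                Set.ncard_le_ncard hsub (Set.toFinite _)
              _ ≤ 3 := by rw [Set.ncard_singleton]; omega
          · -- stayers
            have hcv : c1 v = c v := hc1o v hv4 hv5 hv6
            rw [hcv]
            by_cases hdeg : degN G v ≤ 2
            · have hb := cnt_le_deg H G hle c1 (c v) v
              rcases hc.1 v with h | h <;> omega
            · have hsub : {w | H.Adj v w ∧ c1 w = c v} ⊆ {w | H.Adj v w ∧ c w = c v} := by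
                rintro w ⟨hw, hcw⟩
                refine ⟨hw, ?_⟩
                by_cases hw4 : w = v4
                · exfalso
                  rw [hw4, hc1v4] at hcw
                  have hvm : v ∈ ({v3, v5} : Set V) := by
                    rw [← h3set4]
                    exact ⟨(hw4 ▸ hw).symm, hcw.symm ▸ rfl⟩
                  rcases hvm with rfl | rfl
                  · rw [d3] at hdeg; omega
                  · exact hv5 rfl
                by_cases hw6 : w = v6
                · exfalso
                  rw [hw6, hc1v6] at hcw
                  have hvm : v ∈ ({v1, v5} : Set V) := by
                    rw [← h3set6]
                    exact ⟨(hw6 ▸ hw).symm, hcw.symm ▸ rfl⟩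
                  rcases hvm with rfl | rfl
                  · rw [d1] at hdeg; omega
                  · exact hv5 rfl
                by_cases hw5 : w = v5
                · exfalso
                  rw [hw5, hc1v5] at hcw
                  have hvm : v ∈ ({v6, v4} : Set V) := by
                    rw [← h4set5]
                    exact ⟨(hw5 ▸ hw).symm, hcw.symm ▸ rfl⟩
                  rcases hvm with rfl | rfl
                  · exact hv6 rfl
                  · exact hv4 rfl
                · rw [hc1o w hw4 hw5 hw6] at hcw
                  exact hcw
              exact le_trans (Set.ncard_le_ncard hsub (Set.toFinite _)) (hc.2 v)
      exact finisher c1 hcol1 hc1v6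
        (by rw [hc1o v1 e14 e15 e16]; exact hc1)
        (by rw [hc1o v2 e24 e25 e26]; exact hc2)

end Stmt11Aux


namespace Stmt11Aux

variable {V : Type*} [Fintype V]

lemma tpn_unique (G : SimpleGraph V) (x t : V) (h1 : tpn G x = 1) (ht : G.Adj x t)
    (htd : 3 ≤ degN G t) : ∀ w, G.Adj x w → w ≠ t → degN G w ≤ 2 := by
  have h1' : {w | G.Adj x w ∧ 3 ≤ degN G w}.ncard = 1 := h1
  obtain ⟨a, ha⟩ := Set.ncard_eq_one.1 h1'
  have hta : t = a := by
    have : t ∈ {w | G.Adj x w ∧ 3 ≤ degN G w} := ⟨ht, htd⟩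
    rw [ha] at this
    exact this
  intro w hw hne
  by_contra hcon
  have h3 : 3 ≤ degN G w := by omega
  have : w ∈ {w | G.Adj x w ∧ 3 ≤ degN G w} := ⟨hw, h3⟩
  rw [ha] at this
  exact hne (this.trans hta.symm)

lemma caseA (G : SimpleGraph V) (hnc : ¬ Colorable34 G)
    (hmin : ∀ e ∈ G.edgeSet, Colorable34 (G.deleteEdges {e}))
    (p y : V) (h5p : Is5p G p) (hy : Is5s G y ∨ Is6p G y) (hpy : G.Adj p y) : False := by
  have hdegy : 3 ≤ degN G y := by
    rcases hy with ⟨hd, -⟩ | ⟨hd, -⟩ <;> omega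
  have hsmall := tpn_unique G p y h5p.2 hpy hdegy
  have hdegp : 3 ≤ degN G p := by rw [h5p.1]; omega
  have hx : degN G y = 5 ∨ (degN G y = 6 ∧ ∀ w, G.Adj y w → w ≠ p → degN G w ≤ 2) := by
    rcases hy with ⟨hd, -⟩ | ⟨hd, ht⟩
    · exact Or.inl hd
    · exact Or.inr ⟨hd, tpn_unique G y p ht hpy.symm hdegp⟩
  exact ML1 G hnc hmin p y hpy h5p.1 hsmall hx

lemma midlemma (G : SimpleGraph V) (x a b : V) (hC : Is5s G x ∨ Is6p G x)
    (hax : G.Adj x a) (hxb : G.Adj x b) (hab : a ≠ b)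
    (hda : 3 ≤ degN G a) (hdb : 3 ≤ degN G b) :
    degN G x = 5 ∧ ∀ w, G.Adj x w → w ≠ a → w ≠ b → degN G w ≤ 2 := by
  have hsub : ({a, b} : Set V) ⊆ {w | G.Adj x w ∧ 3 ≤ degN G w} := by
    rintro w (rfl | rfl)
    exacts [⟨hax, hda⟩, ⟨hxb, hdb⟩]
  have h2le : 2 ≤ {w | G.Adj x w ∧ 3 ≤ degN G w}.ncard := by
    rw [← Set.ncard_pair hab]
    exact Set.ncard_le_ncard hsub (Set.toFinite _)
  rcases hC with ⟨hd, ht⟩ | ⟨hd, ht⟩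
  · refine ⟨hd, ?_⟩
    have ht' : {w | G.Adj x w ∧ 3 ≤ degN G w}.ncard = 2 := ht
    have heq : {w | G.Adj x w ∧ 3 ≤ degN G w} = {a, b} :=
      (Set.eq_of_subset_of_ncard_le hsub
        ((ht'.trans (Set.ncard_pair hab).symm).le) (Set.toFinite _)).symm
    intro w hw hna hnb
    by_contra hcon
    have : w ∈ {w | G.Adj x w ∧ 3 ≤ degN G w} := ⟨hw, by omega⟩
    rw [heq] at this
    rcases this with rfl | rfl
    exacts [hna rfl, hnb rfl]
  · exfalso
    have ht' : {w | G.Adj x w ∧ 3 ≤ degN G w}.ncard = 1 := ht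
    omega

lemma sidelemma (G : SimpleGraph V) (x y : V) (hC : Is5s G x ∨ Is6p G x)
    (hxy : G.Adj x y) (hdy : 3 ≤ degN G y) :
    degN G x = 5 ∨ (degN G x = 6 ∧ ∀ w, G.Adj x w → w ≠ y → degN G w ≤ 2) := by
  rcases hC with ⟨hd, -⟩ | ⟨hd, ht⟩
  · exact Or.inl hd
  · exact Or.inr ⟨hd, tpn_unique G x y ht hxy hdy⟩

lemma atPos (G : SimpleGraph V) (hnc : ¬ Colorable34 G)
    (hmin : ∀ e ∈ G.edgeSet, Colorable34 (G.deleteEdges {e}))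
    (w1 w2 w3 w4 w5 w6 : V)
    (hnd : ([w1, w2, w3, w4, w5, w6] : List V).Nodup)
    (b12 : G.Adj w1 w2) (b23 : G.Adj w2 w3) (b34 : G.Adj w3 w4)
    (b45 : G.Adj w4 w5) (b56 : G.Adj w5 w6) (b61 : G.Adj w6 w1)
    (n46 : ¬ G.Adj w4 w6)
    (h5p2 : Is5p G w2)
    (hA : {x ∈ ({w1, w2, w3, w4, w5, w6} : Set V) | degN G x = 2}.ncard = 2)
    (hB : {x ∈ ({w1, w2, w3, w4, w5, w6} : Set V) | Is5p G x}.ncard = 1)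
    (hC3 : 2 < {x ∈ ({w1, w2, w3, w4, w5, w6} : Set V) | Is5s G x ∨ Is6p G x}.ncard) :
    False := by
  have hndup := hnd
  simp only [List.nodup_cons, List.mem_cons, List.mem_singleton, List.not_mem_nil,
    or_false, not_or, List.nodup_nil, and_true, List.mem_nil_iff] at hndup
  obtain ⟨⟨e12, e13, e14, e15, e16⟩, ⟨e23, e24, e25, e26⟩, ⟨e34, e35, e36⟩,
    ⟨e45, e46⟩, e56, -⟩ := hndup
  set S : Set V := {w1, w2, w3, w4, w5, w6} with hSdef
  set A : Set V := {x ∈ S | degN G x = 2} with hAdef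
  set B : Set V := {x ∈ S | Is5p G x} with hBdef
  set C : Set V := {x ∈ S | Is5s G x ∨ Is6p G x} with hCdef
  have hmemS : ∀ x, x ∈ S ↔ (x = w1 ∨ x = w2 ∨ x = w3 ∨ x = w4 ∨ x = w5 ∨ x = w6) := by
    intro x
    simp [hSdef, Set.mem_insert_iff]
  -- cardinality of S
  have c1 : ({w6} : Set V).ncard = 1 := Set.ncard_singleton _
  have c2 : ({w5, w6} : Set V).ncard = 2 := Set.ncard_pair e56
  have c3 : ({w4, w5, w6} : Set V).ncard = 3 := by
    rw [Set.ncard_insert_of_notMem ?_ (Set.toFinite _), c2]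
    simp only [Set.mem_insert_iff, Set.mem_singleton_iff]
    push_neg
    exact ⟨e45, e46⟩
  have c4 : ({w3, w4, w5, w6} : Set V).ncard = 4 := by
    rw [Set.ncard_insert_of_notMem ?_ (Set.toFinite _), c3]
    simp only [Set.mem_insert_iff, Set.mem_singleton_iff]
    push_neg
    exact ⟨e34, e35, e36⟩
  have c5 : ({w2, w3, w4, w5, w6} : Set V).ncard = 5 := by
    rw [Set.ncard_insert_of_notMem ?_ (Set.toFinite _), c4]
    simp only [Set.mem_insert_iff, Set.mem_singleton_iff]
    push_neg
    exact ⟨e23, e24, e25, e26⟩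
  have hS6 : S.ncard = 6 := by
    rw [hSdef, Set.ncard_insert_of_notMem ?_ (Set.toFinite _), c5]
    simp only [Set.mem_insert_iff, Set.mem_singleton_iff]
    push_neg
    exact ⟨e12, e13, e14, e15, e16⟩
  -- disjointness
  have hdBC : Disjoint B C := by
    rw [Set.disjoint_left]
    rintro x ⟨-, hd5, ht1⟩ ⟨-, hC'⟩
    rcases hC' with ⟨hd5', ht2⟩ | ⟨hd6, -⟩ <;> omega
  have hdABC : Disjoint A (B ∪ C) := by
    rw [Set.disjoint_left]
    rintro x ⟨-, hd2'⟩ (⟨-, hd5, -⟩ | ⟨-, hC'⟩)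
    · omega
    · rcases hC' with ⟨hd5', -⟩ | ⟨hd6, -⟩ <;> omega
  have hsubS : A ∪ (B ∪ C) ⊆ S := by
    rintro x (⟨h, -⟩ | ⟨h, -⟩ | ⟨h, -⟩) <;> exact h
  have hucard : (A ∪ (B ∪ C)).ncard = 2 + (1 + C.ncard) := by
    rw [Set.ncard_union_eq hdABC (Set.toFinite _) (Set.toFinite _),
      Set.ncard_union_eq hdBC (Set.toFinite _) (Set.toFinite _), hA, hB]
  have hle6 : (A ∪ (B ∪ C)).ncard ≤ 6 := by
    rw [← hS6]
    exact Set.ncard_le_ncard hsubS (Set.toFinite _)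
  have hCc : C.ncard = 3 := by omega
  have hUeq : A ∪ (B ∪ C) = S :=
    Set.eq_of_subset_of_ncard_le hsubS (by omega) (Set.toFinite _)
  have hcover : ∀ x, x ∈ S → x ∈ A ∨ x ∈ B ∨ x ∈ C := by
    intro x hx
    rw [← hUeq] at hx
    rcases hx with h | h | h
    exacts [Or.inl h, Or.inr (Or.inl h), Or.inr (Or.inr h)]
  -- B = {w2}
  have hw2B : w2 ∈ B := ⟨(hmemS w2).2 (Or.inr (Or.inl rfl)), h5p2⟩
  have hBeq : B = {w2} :=
    (Set.eq_of_subset_of_ncard_le (Set.singleton_subset_iff.2 hw2B)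
      (by rw [hB, Set.ncard_singleton]) (Set.toFinite _)).symm
  -- if a cycle-neighbour of w2 has degree ≥ 3, use caseA
  by_cases hd1 : 3 ≤ degN G w1
  · have hw1C : Is5s G w1 ∨ Is6p G w1 := by
      rcases hcover w1 ((hmemS w1).2 (Or.inl rfl)) with h | h | h
      · exfalso; have := h.2; omega
      · exfalso; rw [hBeq] at h; exact e12 h
      · exact h.2
    exact caseA G hnc hmin w2 w1 h5p2 hw1C b12.symm
  by_cases hd3 : 3 ≤ degN G w3
  · have hw3C : Is5s G w3 ∨ Is6p G w3 := by
      rcases hcover w3 ((hmemS w3).2 (Or.inr (Or.inr (Or.inl rfl)))) with h | h | h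
      · exfalso; have := h.2; omega
      · exfalso; rw [hBeq] at h; exact e23 (h.symm)
      · exact h.2
    exact caseA G hnc hmin w2 w3 h5p2 hw3C b23
  -- both w1, w3 have degree 2
  have hdeg1 : degN G w1 = 2 := by
    have hsub : ({w2, w6} : Set V) ⊆ {w | G.Adj w1 w} := by
      rintro w (rfl | rfl)
      exacts [b12, b61.symm]
    have h2le : 2 ≤ degN G w1 := by
      rw [← Set.ncard_pair e26]
      exact Set.ncard_le_ncard hsub (Set.toFinite _)
    omega
  have hdeg3 : degN G w3 = 2 := by
    have hsub : ({w2, w4} : Set V) ⊆ {w | G.Adj w3 w} := by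
      rintro w (rfl | rfl)
      exacts [b23.symm, b34]
    have h2le : 2 ≤ degN G w3 := by
      rw [← Set.ncard_pair e24]
      exact Set.ncard_le_ncard hsub (Set.toFinite _)
    omega
  have hw1A : w1 ∈ A := ⟨(hmemS w1).2 (Or.inl rfl), hdeg1⟩
  have hw3A : w3 ∈ A := ⟨(hmemS w3).2 (Or.inr (Or.inr (Or.inl rfl))), hdeg3⟩
  have hAeq : A = {w1, w3} := by
    symm
    apply Set.eq_of_subset_of_ncard_le
    · rintro x (rfl | rfl)
      exacts [hw1A, hw3A]
    · rw [hA, Set.ncard_pair e13]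
    · exact Set.toFinite _
  -- w4, w5, w6 are all in C
  have hCof : ∀ x, x ∈ S → x ≠ w1 → x ≠ w2 → x ≠ w3 → (Is5s G x ∨ Is6p G x) := by
    intro x hx hx1 hx2 hx3
    rcases hcover x hx with h | h | h
    · exfalso
      rw [hAeq] at h
      rcases h with rfl | rfl
      exacts [hx1 rfl, hx3 rfl]
    · exfalso
      rw [hBeq] at h
      exact hx2 h
    · exact h.2
  have hC4 : Is5s G w4 ∨ Is6p G w4 :=
    hCof w4 ((hmemS w4).2 (Or.inr (Or.inr (Or.inr (Or.inl rfl)))))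
      (fun h => e14 h.symm) (fun h => e24 h.symm) (fun h => e34 h.symm)
  have hC5 : Is5s G w5 ∨ Is6p G w5 :=
    hCof w5 ((hmemS w5).2 (Or.inr (Or.inr (Or.inr (Or.inr (Or.inl rfl))))))
      (fun h => e15 h.symm) (fun h => e25 h.symm) (fun h => e35 h.symm)
  have hC6 : Is5s G w6 ∨ Is6p G w6 :=
    hCof w6 ((hmemS w6).2 (Or.inr (Or.inr (Or.inr (Or.inr (Or.inr rfl))))))
      (fun h => e16 h.symm) (fun h => e26 h.symm) (fun h => e36 h.symm)
  -- degrees of w4 and w6 are at least 3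
  have hd4 : 3 ≤ degN G w4 := by
    rcases hC4 with ⟨hd, -⟩ | ⟨hd, -⟩ <;> omega
  have hd6 : 3 ≤ degN G w6 := by
    rcases hC6 with ⟨hd, -⟩ | ⟨hd, -⟩ <;> omega
  -- the middle vertex w5 is semi-poor with 3⁺-neighbours w4 and w6
  obtain ⟨h5deg, h5nb⟩ := midlemma G w5 w4 w6 hC5 b45.symm b56 e46 hd4 hd6
  have hd5 : 3 ≤ degN G w5 := by omega
  have h4side := sidelemma G w4 w5 hC4 b45 hd5
  have h6side := sidelemma G w6 w5 hC6 b56.symm hd5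
  exact caseB G hnc hmin w1 w2 w3 w4 w5 w6 hnd b12 b23 b34 b45 b56 b61 n46
    hdeg1 hdeg3 h5p2.1 h5deg h5nb h4side h6side

end Stmt11Aux


set_option maxHeartbeats 1000000

/-- In a minimally non-(3,4)-colorable graph of girth at least 5, if
exactly two vertices of a 6-cycle have degree 2 and exactly one of them is a
5p-vertex, then at most two of its vertices are 5s-vertices or 6p-vertices. -/
theorem stmt_11 {V : Type*} [Fintype V] (G : SimpleGraph V)
    (hG : MinNonColorable34 G) (hgirth : GirthAtLeast5 G)
    (u1 u2 u3 u4 u5 u6 : V)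
    (hnd : ([u1, u2, u3, u4, u5, u6] : List V).Nodup)
    (a12 : G.Adj u1 u2) (a23 : G.Adj u2 u3) (a34 : G.Adj u3 u4)
    (a45 : G.Adj u4 u5) (a56 : G.Adj u5 u6) (a61 : G.Adj u6 u1)
    (h2 : {x ∈ ({u1, u2, u3, u4, u5, u6} : Set V) | degN G x = 2}.ncard = 2)
    (h5p : {x ∈ ({u1, u2, u3, u4, u5, u6} : Set V) | Is5p G x}.ncard = 1) :
    {x ∈ ({u1, u2, u3, u4, u5, u6} : Set V) | Is5s G x ∨ Is6p G x}.ncard ≤ 2 := by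
  classical
  by_contra hcon
  push_neg at hcon
  have hnc : ¬ Colorable34 G := hG.1
  have hmin : ∀ e ∈ G.edgeSet, Colorable34 (G.deleteEdges {e}) := hG.2.2
  obtain ⟨x0, hx0eq⟩ := Set.ncard_eq_one.1 h5p
  have hx0mem : x0 ∈ {x ∈ ({u1, u2, u3, u4, u5, u6} : Set V) | Is5p G x} := by
    rw [hx0eq]; exact rfl
  obtain ⟨hx0T, hx0is⟩ := hx0mem
  have hndup := hnd
  simp only [List.nodup_cons, List.mem_cons, List.mem_singleton, List.not_mem_nil,
    or_false, not_or, List.nodup_nil, and_true, List.mem_nil_iff] at hndup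
  obtain ⟨⟨e12, e13, e14, e15, e16⟩, ⟨e23, e24, e25, e26⟩, ⟨e34, e35, e36⟩,
    ⟨e45, e46⟩, e56, -⟩ := hndup
  have n35 : ¬ G.Adj u3 u5 := fun h => (hgirth.1 u3 u4 u5 a34 a45) h.symm
  have n46 : ¬ G.Adj u4 u6 := fun h => (hgirth.1 u4 u5 u6 a45 a56) h.symm
  have n51 : ¬ G.Adj u5 u1 := fun h => (hgirth.1 u5 u6 u1 a56 a61) h.symm
  have n62 : ¬ G.Adj u6 u2 := fun h => (hgirth.1 u6 u1 u2 a61 a12) h.symm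
  have n13 : ¬ G.Adj u1 u3 := fun h => (hgirth.1 u1 u2 u3 a12 a23) h.symm
  have n24 : ¬ G.Adj u2 u4 := fun h => (hgirth.1 u2 u3 u4 a23 a34) h.symm
  have hx0cases : x0 = u1 ∨ x0 = u2 ∨ x0 = u3 ∨ x0 = u4 ∨ x0 = u5 ∨ x0 = u6 := by
    simpa [Set.mem_insert_iff] using hx0T
  rcases hx0cases with hk | hk | hk | hk | hk | hk
  · -- x0 = u1
    rw [hk] at hx0is
    have hset : ({u6, u1, u2, u3, u4, u5} : Set V) = ({u1, u2, u3, u4, u5, u6} : Set V) := by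
      ext x
      simp only [Set.mem_insert_iff, Set.mem_singleton_iff]
      tauto
    exact Stmt11Aux.atPos G hnc hmin u6 u1 u2 u3 u4 u5
      (by
        simp only [List.nodup_cons, List.mem_cons, List.mem_singleton, List.not_mem_nil,
          or_false, not_or, List.nodup_nil, and_true, List.mem_nil_iff]
        exact ⟨⟨(fun h => e16 h.symm), (fun h => e26 h.symm), (fun h => e36 h.symm), (fun h => e46 h.symm), (fun h => e56 h.symm)⟩, ⟨e12, e13, e14, e15⟩, ⟨e23, e24, e25⟩, ⟨e34, e35⟩, e45, not_false⟩)
      a61 a12 a23 a34 a45 a56 n35 hx0is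
      (by simp only [hset]; exact h2)
      (by simp only [hset]; exact h5p)
      (by simp only [hset]; exact hcon)
  · -- x0 = u2
    rw [hk] at hx0is
    exact Stmt11Aux.atPos G hnc hmin u1 u2 u3 u4 u5 u6
      (by
        simp only [List.nodup_cons, List.mem_cons, List.mem_singleton, List.not_mem_nil,
          or_false, not_or, List.nodup_nil, and_true, List.mem_nil_iff]
        exact ⟨⟨e12, e13, e14, e15, e16⟩, ⟨e23, e24, e25, e26⟩, ⟨e34, e35, e36⟩, ⟨e45, e46⟩, e56, not_false⟩)
      a12 a23 a34 a45 a56 a61 n46 hx0is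
      h2 h5p hcon
  · -- x0 = u3
    rw [hk] at hx0is
    have hset : ({u2, u3, u4, u5, u6, u1} : Set V) = ({u1, u2, u3, u4, u5, u6} : Set V) := by
      ext x
      simp only [Set.mem_insert_iff, Set.mem_singleton_iff]
      tauto
    exact Stmt11Aux.atPos G hnc hmin u2 u3 u4 u5 u6 u1
      (by
        simp only [List.nodup_cons, List.mem_cons, List.mem_singleton, List.not_mem_nil,
          or_false, not_or, List.nodup_nil, and_true, List.mem_nil_iff]
        exact ⟨⟨e23, e24, e25, e26, (fun h => e12 h.symm)⟩, ⟨e34, e35, e36, (fun h => e13 h.symm)⟩, ⟨e45, e46, (fun h => e14 h.symm)⟩, ⟨e56, (fun h => e15 h.symm)⟩, (fun h => e16 h.symm), not_false⟩)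
      a23 a34 a45 a56 a61 a12 n51 hx0is
      (by simp only [hset]; exact h2)
      (by simp only [hset]; exact h5p)
      (by simp only [hset]; exact hcon)
  · -- x0 = u4
    rw [hk] at hx0is
    have hset : ({u3, u4, u5, u6, u1, u2} : Set V) = ({u1, u2, u3, u4, u5, u6} : Set V) := by
      ext x
      simp only [Set.mem_insert_iff, Set.mem_singleton_iff]
      tauto
    exact Stmt11Aux.atPos G hnc hmin u3 u4 u5 u6 u1 u2
      (by
        simp only [List.nodup_cons, List.mem_cons, List.mem_singleton, List.not_mem_nil,
          or_false, not_or, List.nodup_nil, and_true, List.mem_nil_iff]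
        exact ⟨⟨e34, e35, e36, (fun h => e13 h.symm), (fun h => e23 h.symm)⟩, ⟨e45, e46, (fun h => e14 h.symm), (fun h => e24 h.symm)⟩, ⟨e56, (fun h => e15 h.symm), (fun h => e25 h.symm)⟩, ⟨(fun h => e16 h.symm), (fun h => e26 h.symm)⟩, e12, not_false⟩)
      a34 a45 a56 a61 a12 a23 n62 hx0is
      (by simp only [hset]; exact h2)
      (by simp only [hset]; exact h5p)
      (by simp only [hset]; exact hcon)
  · -- x0 = u5
    rw [hk] at hx0is
    have hset : ({u4, u5, u6, u1, u2, u3} : Set V) = ({u1, u2, u3, u4, u5, u6} : Set V) := by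
      ext x
      simp only [Set.mem_insert_iff, Set.mem_singleton_iff]
      tauto
    exact Stmt11Aux.atPos G hnc hmin u4 u5 u6 u1 u2 u3
      (by
        simp only [List.nodup_cons, List.mem_cons, List.mem_singleton, List.not_mem_nil,
          or_false, not_or, List.nodup_nil, and_true, List.mem_nil_iff]
        exact ⟨⟨e45, e46, (fun h => e14 h.symm), (fun h => e24 h.symm), (fun h => e34 h.symm)⟩, ⟨e56, (fun h => e15 h.symm), (fun h => e25 h.symm), (fun h => e35 h.symm)⟩, ⟨(fun h => e16 h.symm), (fun h => e26 h.symm), (fun h => e36 h.symm)⟩, ⟨e12, e13⟩, e23, not_false⟩)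
      a45 a56 a61 a12 a23 a34 n13 hx0is
      (by simp only [hset]; exact h2)
      (by simp only [hset]; exact h5p)
      (by simp only [hset]; exact hcon)
  · -- x0 = u6
    rw [hk] at hx0is
    have hset : ({u5, u6, u1, u2, u3, u4} : Set V) = ({u1, u2, u3, u4, u5, u6} : Set V) := by
      ext x
      simp only [Set.mem_insert_iff, Set.mem_singleton_iff]
      tauto
    exact Stmt11Aux.atPos G hnc hmin u5 u6 u1 u2 u3 u4
      (by
        simp only [List.nodup_cons, List.mem_cons, List.mem_singleton, List.not_mem_nil,
          or_false, not_or, List.nodup_nil, and_true, List.mem_nil_iff]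
        exact ⟨⟨e56, (fun h => e15 h.symm), (fun h => e25 h.symm), (fun h => e35 h.symm), (fun h => e45 h.symm)⟩, ⟨(fun h => e16 h.symm), (fun h => e26 h.symm), (fun h => e36 h.symm), (fun h => e46 h.symm)⟩, ⟨e12, e13, e14⟩, ⟨e23, e24⟩, e34, not_false⟩)
      a56 a61 a12 a23 a34 a45 n24 hx0is
      (by simp only [hset]; exact h2)
      (by simp only [hset]; exact h5p)
      (by simp only [hset]; exact hcon)
end

section
/- Let G be a minimally non-(3,4)-colorable graph with girth at least 5, and let C = u_1 u_2 u_3 u_4 u_5 u_6 be a 6-cycle in G such that exactly one of the vertices u_1, ..., u_6 has degree 2. Then at most one of the vertices u_1, ..., u_6 is a 5p-vertex. -/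
section AuxStmt13

variable {V : Type*} [Fintype V] {G : SimpleGraph V}

lemma ncard_pair_le' {a b : V} (hab : a ≠ b) {s : Set V} (ha : a ∈ s) (hb : b ∈ s) :
    2 ≤ s.ncard := by
  have h : ({a, b} : Set V) ⊆ s := by
    intro x hx
    rcases hx with rfl | hx
    · exact ha
    · rcases hx with rfl; exact hb
  calc 2 = ({a, b} : Set V).ncard := (Set.ncard_pair hab).symm
    _ ≤ s.ncard := Set.ncard_le_ncard h s.toFinite

lemma two_le_deg' {x a b : V} (hxa : G.Adj x a) (hxb : G.Adj x b) (hab : a ≠ b) :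
    2 ≤ degN G x :=
  ncard_pair_le' hab (show a ∈ {w | G.Adj x w} from hxa) (show b ∈ {w | G.Adj x w} from hxb)

lemma key1' {x a b : V} (h5 : Is5p G x) (hxa : G.Adj x a) (hxb : G.Adj x b) (hab : a ≠ b)
    (h3a : 3 ≤ degN G a) (h3b : 3 ≤ degN G b) : False := by
  have h2 : 2 ≤ tpn G x :=
    ncard_pair_le' hab (show a ∈ {w | G.Adj x w ∧ 3 ≤ degN G w} from ⟨hxa, h3a⟩)
      (show b ∈ {w | G.Adj x w ∧ 3 ≤ degN G w} from ⟨hxb, h3b⟩)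
  have h1 : tpn G x = 1 := h5.2
  omega

/-- If `x` is a 5p-vertex adjacent to `a` and `b`, both of degree ≥ 2, and any
degree-2 vertex among `a, b` must equal `d`, then `x` is adjacent to `d`. -/
lemma adj_to_d' {x a b d : V} (h5 : Is5p G x)
    (hxa : G.Adj x a) (hxb : G.Adj x b) (hab : a ≠ b)
    (h2a : 2 ≤ degN G a) (h2b : 2 ≤ degN G b)
    (hda : degN G a = 2 → a = d) (hdb : degN G b = 2 → b = d) : G.Adj x d := by
  by_cases h3a : 3 ≤ degN G a
  · by_cases h3b : 3 ≤ degN G b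
    · exact absurd (key1' h5 hxa hxb hab h3a h3b) not_false
    · have h2 : degN G b = 2 := by omega
      exact (hdb h2) ▸ hxb
  · have h2 : degN G a = 2 := by omega
    exact (hda h2) ▸ hxa

/-- Key recoloring lemma: in a minimally non-(3,4)-colorable graph, a degree-2
vertex cannot have two nonadjacent degree-5 neighbors. -/
lemma lemA' (G : SimpleGraph V) (hG : MinNonColorable34 G)
    (v p q : V) (hpq : p ≠ q) (hvp : G.Adj v p) (hvq : G.Adj v q)
    (hnadj : ¬ G.Adj p q) (hdv : degN G v = 2) (hdp : degN G p = 5)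
    (hdq : degN G q = 5) : False := by
  classical
  obtain ⟨hnc, -, hdelE⟩ := hG
  have hvnep : v ≠ p := G.ne_of_adj hvp
  have hvneq : v ≠ q := G.ne_of_adj hvq
  have he : s(v, p) ∈ G.edgeSet := hvp
  obtain ⟨c, hcol, hcnt⟩ := hdelE _ he
  set Ge := G.deleteEdges {s(v, p)} with hGedef
  have hadjGe : ∀ a b : V, Ge.Adj a b ↔ G.Adj a b ∧ ¬(a = v ∧ b = p) ∧ ¬(a = p ∧ b = v) := by
    intro a b
    rw [hGedef]
    simp only [SimpleGraph.deleteEdges_adj, Set.mem_singleton_iff, Sym2.eq_iff]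
    tauto
  -- neighbors of v are exactly p and q
  have hnbv : {x | G.Adj v x} = {p, q} := by
    symm
    apply Set.eq_of_subset_of_ncard_le
    · intro x hx
      rcases hx with rfl | hx
      · exact hvp
      · rcases hx with rfl; exact hvq
    · rw [Set.ncard_pair hpq]; exact le_of_eq hdv
    · exact Set.toFinite _
  have hmemv : ∀ x, G.Adj v x → x = p ∨ x = q := by
    intro x hx
    have hx' : x ∈ ({p, q} : Set V) := hnbv ▸ hx
    simpa using hx'
  -- transfer: for w ∉ {v, p}, counting sets in G and Ge coincide
  have hset : ∀ (w : V), w ≠ v → w ≠ p → ∀ P : V → Prop,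
      {x | Ge.Adj w x ∧ P x} = {x | G.Adj w x ∧ P x} := by
    intro w hwv hwp P
    ext x
    simp only [Set.mem_setOf_eq, hadjGe]
    constructor
    · rintro ⟨⟨h, -, -⟩, hP⟩; exact ⟨h, hP⟩
    · rintro ⟨h, hP⟩
      exact ⟨⟨h, fun h' => hwv h'.1, fun h' => hwp h'.1⟩, hP⟩
  have hb : ∀ w : V, w ≠ v → w ≠ p → {x | G.Adj w x ∧ c x = c w}.ncard ≤ c w := by
    intro w h1 h2
    rw [← hset w h1 h2]
    exact hcnt w
  have hbv : ∀ P : V → Prop, {x | G.Adj v x ∧ P x}.ncard ≤ 2 := by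
    intro P
    have hsub : {x | G.Adj v x ∧ P x} ⊆ {x | G.Adj v x} := fun x hx => hx.1
    calc {x | G.Adj v x ∧ P x}.ncard ≤ ({x | G.Adj v x}).ncard :=
          Set.ncard_le_ncard hsub (Set.toFinite _)
      _ = 2 := hdv
  -- c v = c p
  have hcvp : c v = c p := by
    by_contra hne
    apply hnc
    refine ⟨c, hcol, fun w => ?_⟩
    by_cases hwv : w = v
    · have h2 : 2 ≤ c w := by rcases hcol w with h | h <;> omega
      subst hwv
      exact le_trans (hbv _) h2
    by_cases hwp : w = p
    · subst hwp
      have heq : {x | G.Adj w x ∧ c x = c w} = {x | Ge.Adj w x ∧ c x = c w} := by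
        ext x
        simp only [Set.mem_setOf_eq, hadjGe]
        constructor
        · rintro ⟨h, hP⟩
          refine ⟨⟨h, fun h' => hvnep h'.1.symm, fun h' => hne ?_⟩, hP⟩
          rw [← h'.2]; exact hP
        · rintro ⟨⟨h, -, -⟩, hP⟩; exact ⟨h, hP⟩
      rw [heq]
      exact hcnt w
    · exact hb w hwv hwp
  -- p is overloaded in G
  have hnotle : ¬ {x | G.Adj p x ∧ c x = c p}.ncard ≤ c p := by
    intro hle
    apply hnc
    refine ⟨c, hcol, fun w => ?_⟩
    by_cases hwv : w = v
    · have h2 : 2 ≤ c w := by rcases hcol w with h | h <;> omega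
      subst hwv
      exact le_trans (hbv _) h2
    by_cases hwp : w = p
    · subst hwp; exact hle
    · exact hb w hwv hwp
  have hub : {x | G.Adj p x ∧ c x = c p}.ncard ≤ c p + 1 := by
    have hsub : {x | G.Adj p x ∧ c x = c p} ⊆ insert v {x | Ge.Adj p x ∧ c x = c p} := by
      rintro x ⟨h, hP⟩
      by_cases hxv : x = v
      · exact Or.inl hxv
      · refine Or.inr ⟨(hadjGe p x).mpr ⟨h, fun h' => hvnep h'.1.symm, fun h' => hxv h'.2⟩, hP⟩
    calc {x | G.Adj p x ∧ c x = c p}.ncard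
        ≤ (insert v {x | Ge.Adj p x ∧ c x = c p}).ncard :=
          Set.ncard_le_ncard hsub (Set.toFinite _)
      _ ≤ {x | Ge.Adj p x ∧ c x = c p}.ncard + 1 := Set.ncard_insert_le _ _
      _ ≤ c p + 1 := by have := hcnt p; omega
  have hcp : {x | G.Adj p x ∧ c x = c p}.ncard = c p + 1 := by omega
  have hnbp : ({x | G.Adj p x}).ncard = 5 := hdp
  have hnbq : ({x | G.Adj q x}).ncard = 5 := hdq
  rcases hcol v with hv3 | hv4
  · -- Case c v = 3
    have hp3 : c p = 3 := hcvp ▸ hv3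
    have hcp4 : {x | G.Adj p x ∧ c x = 3}.ncard = 4 := by
      rw [show ({x | G.Adj p x ∧ c x = 3}) = {x | G.Adj p x ∧ c x = c p} from by rw [hp3]]
      rw [hcp, hp3]
    have hvinP : v ∈ {x | G.Adj p x ∧ c x = 3} := ⟨hvp.symm, hv3⟩
    have hPdiff : ({x | G.Adj p x ∧ c x = 3} \ {v}).ncard = 3 := by
      rw [Set.ncard_diff_singleton_of_mem hvinP, hcp4]
    by_cases hqsat : c q = 4 ∧ {x | G.Adj q x ∧ c x = 4}.ncard = 4
    · -- q is 4-saturated: all neighbors of q except v have color 4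
      obtain ⟨hq4, hqn⟩ := hqsat
      have hallq : ∀ x, G.Adj q x → x ≠ v → c x = 4 := by
        have hsub : {x | G.Adj q x ∧ c x = 4} ⊆ {x | G.Adj q x} \ {v} := by
          rintro x ⟨hx, hcx⟩
          refine ⟨hx, ?_⟩
          intro hxv
          rcases hxv with rfl
          omega
        have hcard : ({x | G.Adj q x} \ {v}).ncard = 4 := by
          rw [Set.ncard_diff_singleton_of_mem (show v ∈ {x | G.Adj q x} from hvq.symm), hnbq]
        have heq : {x | G.Adj q x ∧ c x = 4} = {x | G.Adj q x} \ {v} :=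
          Set.eq_of_subset_of_ncard_le hsub (by rw [hcard, hqn]) (Set.toFinite _)
        intro x hx hxv
        have hx' : x ∈ {x | G.Adj q x ∧ c x = 4} := by
          rw [heq]; exact ⟨hx, by simpa using hxv⟩
        exact hx'.2
      -- recolor v ↦ 4 and q ↦ 3
      set c2 : V → ℕ := Function.update (Function.update c v 4) q 3 with hc2def
      have hc2v : c2 v = 4 := by
        rw [hc2def, Function.update_of_ne hvneq, Function.update_self]
      have hc2q : c2 q = 3 := by rw [hc2def, Function.update_self]
      have hc2o : ∀ x, x ≠ v → x ≠ q → c2 x = c x := by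
        intro x h1 h2
        rw [hc2def, Function.update_of_ne h2, Function.update_of_ne h1]
      apply hnc
      refine ⟨c2, fun w => ?_, fun w => ?_⟩
      · by_cases h1 : w = q
        · subst h1; left; exact hc2q
        by_cases h2 : w = v
        · subst h2; right; exact hc2v
        · rw [hc2o w h2 h1]; exact hcol w
      · by_cases hwv : w = v
        · have h2 : 2 ≤ c2 w := by rw [hwv, hc2v]; omega
          subst hwv
          exact le_trans (hbv _) h2
        by_cases hwq : w = q
        · subst hwq
          have hempty : {x | G.Adj w x ∧ c2 x = c2 w} = ∅ := by
            ext x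
            simp only [Set.mem_setOf_eq, Set.mem_empty_iff_false, iff_false, not_and]
            intro hx hcx
            rw [hc2q] at hcx
            by_cases hxv : x = v
            · subst hxv; rw [hc2v] at hcx; omega
            · have hxq : x ≠ w := fun h => G.ne_of_adj hx h.symm
              rw [hc2o x hxv hxq] at hcx
              have := hallq x hx hxv
              omega
          rw [hempty, Set.ncard_empty, hc2q]; omega
        by_cases hwp : w = p
        · subst hwp
          have hc2p : c2 w = 3 := by rw [hc2o w hvnep.symm (fun h => hpq h)]; exact hp3
          have heqs : {x | G.Adj w x ∧ c2 x = c2 w} = {x | G.Adj w x ∧ c x = 3} \ {v} := by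
            ext x
            simp only [Set.mem_setOf_eq, Set.mem_diff, Set.mem_singleton_iff, hc2p]
            constructor
            · rintro ⟨hx, hcx⟩
              by_cases hxv : x = v
              · subst hxv; rw [hc2v] at hcx; omega
              by_cases hxq : x = q
              · subst hxq; exact absurd hx hnadj
              · rw [hc2o x hxv hxq] at hcx
                exact ⟨⟨hx, hcx⟩, hxv⟩
            · rintro ⟨⟨hx, hcx⟩, hxv⟩
              have hxq : x ≠ q := by
                rintro rfl; exact hnadj hx
              rw [hc2o x hxv hxq]
              exact ⟨hx, hcx⟩
          rw [heqs, hPdiff, hc2p]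
        · -- w ∉ {v, p, q}
          have hnwv : ¬ G.Adj w v := by
            intro h
            rcases hmemv w h.symm with rfl | rfl
            · exact hwp rfl
            · exact hwq rfl
          have hc2w : c2 w = c w := hc2o w hwv hwq
          have hsub : {x | G.Adj w x ∧ c2 x = c2 w} ⊆ {x | G.Adj w x ∧ c x = c w} := by
            rintro x ⟨hx, hcx⟩
            have hxv : x ≠ v := by rintro rfl; exact hnwv hx
            by_cases hxq : x = q
            · subst hxq
              rw [hc2q, hc2w] at hcx
              have := hallq w hx.symm hwv
              omega
            · rw [hc2o x hxv hxq, hc2w] at hcx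
              exact ⟨hx, hcx⟩
          have hle := le_trans (Set.ncard_le_ncard hsub (Set.toFinite _)) (hb w hwv hwp)
          omega
    · -- q is not 4-saturated: recolor v ↦ 4
      set c1 : V → ℕ := Function.update c v 4 with hc1def
      have hc1v : c1 v = 4 := by rw [hc1def, Function.update_self]
      have hc1o : ∀ x, x ≠ v → c1 x = c x := by
        intro x h1
        rw [hc1def, Function.update_of_ne h1]
      apply hnc
      refine ⟨c1, fun w => ?_, fun w => ?_⟩
      · by_cases h2 : w = v
        · subst h2; right; exact hc1v
        · rw [hc1o w h2]; exact hcol w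
      · by_cases hwv : w = v
        · have h2 : 2 ≤ c1 w := by rw [hwv, hc1v]; omega
          subst hwv
          exact le_trans (hbv _) h2
        by_cases hwp : w = p
        · subst hwp
          have hc1p : c1 w = 3 := by rw [hc1o w hvnep.symm]; exact hp3
          have heqs : {x | G.Adj w x ∧ c1 x = c1 w} = {x | G.Adj w x ∧ c x = 3} \ {v} := by
            ext x
            simp only [Set.mem_setOf_eq, Set.mem_diff, Set.mem_singleton_iff, hc1p]
            constructor
            · rintro ⟨hx, hcx⟩
              by_cases hxv : x = v
              · subst hxv; rw [hc1v] at hcx; omega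
              · rw [hc1o x hxv] at hcx
                exact ⟨⟨hx, hcx⟩, hxv⟩
            · rintro ⟨⟨hx, hcx⟩, hxv⟩
              rw [hc1o x hxv]
              exact ⟨hx, hcx⟩
          rw [heqs, hPdiff, hc1p]
        by_cases hwq : w = q
        · subst hwq
          have hc1q : c1 w = c w := hc1o w hwv
          rcases hcol w with hq3 | hq4
          · have hsub : {x | G.Adj w x ∧ c1 x = c1 w} ⊆ {x | G.Adj w x ∧ c x = c w} := by
              rintro x ⟨hx, hcx⟩
              rw [hc1q] at hcx
              by_cases hxv : x = v
              · subst hxv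
                rw [hc1v] at hcx
                omega
              · rw [hc1o x hxv] at hcx
                exact ⟨hx, hcx⟩
            have hle := le_trans (Set.ncard_le_ncard hsub (Set.toFinite _)) (hb w hwv hwp)
            omega
          · have hqn : {x | G.Adj w x ∧ c x = 4}.ncard ≤ 3 := by
              have h1 := hb w hwv hwp
              rw [hq4] at h1
              have h2 : {x | G.Adj w x ∧ c x = 4}.ncard ≠ 4 := fun h => hqsat ⟨hq4, h⟩
              omega
            have hsub : {x | G.Adj w x ∧ c1 x = c1 w} ⊆ insert v {x | G.Adj w x ∧ c x = 4} := by
              rintro x ⟨hx, hcx⟩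
              by_cases hxv : x = v
              · exact Or.inl hxv
              · rw [hc1o x hxv, hc1q, hq4] at hcx
                exact Or.inr ⟨hx, hcx⟩
            have hle := le_trans (Set.ncard_le_ncard hsub (Set.toFinite _))
              (Set.ncard_insert_le _ _)
            omega
        · have hnwv : ¬ G.Adj w v := by
            intro h
            rcases hmemv w h.symm with rfl | rfl
            · exact hwp rfl
            · exact hwq rfl
          have hc1w : c1 w = c w := hc1o w hwv
          have hsub : {x | G.Adj w x ∧ c1 x = c1 w} ⊆ {x | G.Adj w x ∧ c x = c w} := by
            rintro x ⟨hx, hcx⟩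
            have hxv : x ≠ v := by rintro rfl; exact hnwv hx
            rw [hc1o x hxv, hc1w] at hcx
            exact ⟨hx, hcx⟩
          have hle := le_trans (Set.ncard_le_ncard hsub (Set.toFinite _)) (hb w hwv hwp)
          omega
  · -- Case c v = 4 : all five neighbors of p have color 4; recolor p ↦ 3
    have hp4 : c p = 4 := hcvp ▸ hv4
    have hallp : ∀ x, G.Adj p x → c x = 4 := by
      have hsub : {x | G.Adj p x ∧ c x = c p} ⊆ {x | G.Adj p x} := fun x hx => hx.1
      have heq : {x | G.Adj p x ∧ c x = c p} = {x | G.Adj p x} :=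
        Set.eq_of_subset_of_ncard_le hsub (by rw [hnbp, hcp, hp4]) (Set.toFinite _)
      intro x hx
      have hx' : x ∈ {x | G.Adj p x ∧ c x = c p} := by rw [heq]; exact hx
      rw [hp4] at hx'
      exact hx'.2
    set c' : V → ℕ := Function.update c p 3 with hc'def
    have hc'p : c' p = 3 := by rw [hc'def, Function.update_self]
    have hc'o : ∀ x, x ≠ p → c' x = c x := by
      intro x h1
      rw [hc'def, Function.update_of_ne h1]
    apply hnc
    refine ⟨c', fun w => ?_, fun w => ?_⟩
    · by_cases h1 : w = p
      · subst h1; left; exact hc'p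
      · rw [hc'o w h1]; exact hcol w
    · by_cases hwv : w = v
      · have h2 : 2 ≤ c' w := by
          have hwp' : w ≠ p := by rw [hwv]; exact hvnep
          rw [hc'o w hwp', hwv, hv4]; omega
        subst hwv
        exact le_trans (hbv _) h2
      by_cases hwp : w = p
      · subst hwp
        have hempty : {x | G.Adj w x ∧ c' x = c' w} = ∅ := by
          ext x
          simp only [Set.mem_setOf_eq, Set.mem_empty_iff_false, iff_false, not_and]
          intro hx hcx
          have hxp : x ≠ w := fun h => G.ne_of_adj hx h.symm
          rw [hc'o x hxp, hc'p] at hcx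
          have := hallp x hx
          omega
        rw [hempty, Set.ncard_empty, hc'p]; omega
      · have hc'w : c' w = c w := hc'o w hwp
        have hnwp : c w = 3 → ¬ G.Adj w p := by
          intro h3 hadj
          have := hallp w hadj.symm
          omega
        rcases hcol w with hw3 | hw4
        · have heqs : {x | G.Adj w x ∧ c' x = c' w} = {x | G.Adj w x ∧ c x = c w} := by
            ext x
            simp only [Set.mem_setOf_eq]
            constructor
            · rintro ⟨hx, hcx⟩
              have hxp : x ≠ p := by rintro rfl; exact hnwp hw3 hx
              rw [hc'o x hxp, hc'w] at hcx
              exact ⟨hx, hcx⟩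
            · rintro ⟨hx, hcx⟩
              have hxp : x ≠ p := by rintro rfl; exact hnwp hw3 hx
              rw [hc'o x hxp, hc'w]
              exact ⟨hx, hcx⟩
          rw [heqs, hc'w]
          exact hb w hwv hwp
        · have hsub : {x | G.Adj w x ∧ c' x = c' w} ⊆ {x | G.Adj w x ∧ c x = c w} := by
            rintro x ⟨hx, hcx⟩
            have hxp : x ≠ p := by
              rintro rfl
              rw [hc'p, hc'w, hw4] at hcx
              omega
            rw [hc'o x hxp, hc'w] at hcx
            exact ⟨hx, hcx⟩
          have hle := le_trans (Set.ncard_le_ncard hsub (Set.toFinite _)) (hb w hwv hwp)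
          omega

end AuxStmt13

/-- In a minimally non-(3,4)-colorable graph of girth at least 5, if
exactly one vertex of a 6-cycle has degree 2, then at most one of its vertices is
a 5p-vertex. -/
theorem stmt_13 {V : Type*} [Fintype V] (G : SimpleGraph V)
    (hG : MinNonColorable34 G) (hgirth : GirthAtLeast5 G)
    (u1 u2 u3 u4 u5 u6 : V)
    (hnd : ([u1, u2, u3, u4, u5, u6] : List V).Nodup)
    (a12 : G.Adj u1 u2) (a23 : G.Adj u2 u3) (a34 : G.Adj u3 u4)
    (a45 : G.Adj u4 u5) (a56 : G.Adj u5 u6) (a61 : G.Adj u6 u1)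
    (h2 : {x ∈ ({u1, u2, u3, u4, u5, u6} : Set V) | degN G x = 2}.ncard = 1) :
    {x ∈ ({u1, u2, u3, u4, u5, u6} : Set V) | Is5p G x}.ncard ≤ 1 := by
  classical
  by_contra hcon
  push_neg at hcon
  obtain ⟨p, q, hp, hq, hpq⟩ := (Set.one_lt_ncard_iff (Set.toFinite _)).mp hcon
  obtain ⟨hpS, hp5⟩ := hp
  obtain ⟨hqS, hq5⟩ := hq
  obtain ⟨d, hd⟩ := Set.ncard_eq_one.mp h2
  have hdmem : d ∈ {x ∈ ({u1, u2, u3, u4, u5, u6} : Set V) | degN G x = 2} := by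
    rw [hd]; rfl
  have hd2 : degN G d = 2 := hdmem.2
  have hdun : ∀ y, y ∈ ({u1, u2, u3, u4, u5, u6} : Set V) → degN G y = 2 → y = d := by
    intro y hy hy2
    have hyy : y ∈ {x ∈ ({u1, u2, u3, u4, u5, u6} : Set V) | degN G x = 2} := ⟨hy, hy2⟩
    rw [hd] at hyy
    simpa using hyy
  have hne' : u2 ≠ u6 ∧ u1 ≠ u3 ∧ u2 ≠ u4 ∧ u3 ≠ u5 ∧ u4 ≠ u6 ∧ u1 ≠ u5 := by
    simp only [List.nodup_cons, List.mem_cons, List.not_mem_nil, or_false, not_or,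
      List.nodup_nil, and_true] at hnd
    refine ⟨?_, ?_, ?_, ?_, ?_, ?_⟩ <;> tauto
  obtain ⟨h26, h13, h24, h35, h46, h15⟩ := hne'
  have hdu1 : 2 ≤ degN G u1 := two_le_deg' a12 a61.symm h26
  have hdu2 : 2 ≤ degN G u2 := two_le_deg' a23 a12.symm (Ne.symm h13)
  have hdu3 : 2 ≤ degN G u3 := two_le_deg' a34 a23.symm (Ne.symm h24)
  have hdu4 : 2 ≤ degN G u4 := two_le_deg' a45 a34.symm (Ne.symm h35)
  have hdu5 : 2 ≤ degN G u5 := two_le_deg' a56 a45.symm (Ne.symm h46)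
  have hdu6 : 2 ≤ degN G u6 := two_le_deg' a61 a56.symm h15
  have key : ∀ x, x ∈ ({u1, u2, u3, u4, u5, u6} : Set V) → Is5p G x → G.Adj x d := by
    intro x hx h5
    simp only [Set.mem_insert_iff, Set.mem_singleton_iff] at hx
    rcases hx with rfl | rfl | rfl | rfl | rfl | rfl
    · exact adj_to_d' h5 a12 a61.symm h26 hdu2 hdu6 (hdun u2 (by simp)) (hdun u6 (by simp))
    · exact adj_to_d' h5 a23 a12.symm (Ne.symm h13) hdu3 hdu1
        (hdun u3 (by simp)) (hdun u1 (by simp))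
    · exact adj_to_d' h5 a34 a23.symm (Ne.symm h24) hdu4 hdu2
        (hdun u4 (by simp)) (hdun u2 (by simp))
    · exact adj_to_d' h5 a45 a34.symm (Ne.symm h35) hdu5 hdu3
        (hdun u5 (by simp)) (hdun u3 (by simp))
    · exact adj_to_d' h5 a56 a45.symm (Ne.symm h46) hdu6 hdu4
        (hdun u6 (by simp)) (hdun u4 (by simp))
    · exact adj_to_d' h5 a61 a56.symm h15 hdu1 hdu5
        (hdun u1 (by simp)) (hdun u5 (by simp))
  have hApd : G.Adj p d := key p hpS hp5
  have hAqd : G.Adj q d := key q hqS hq5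
  have hnadjpq : ¬ G.Adj p q := fun h => hgirth.1 d p q hApd.symm h hAqd
  exact lemA' G hG d p q hpq hApd.symm hAqd.symm hnadjpq hd2 hp5.1 hq5.1
end
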